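/- arXiv:1810.11617 — 8 statements merged into one kernel-verified Lean document; each statement's English description precedes it below -/
import Mathlib

section
/- Let X and Y be real Banach spaces, C a nonempty closed subset of X, f : X → ℝ and g : X → Y, and let x₀ ∈ C with g(x₀) = 0 be a local minimizer of f over the set {x ∈ C : g(x) = 0}. Assume: f is Gâteaux differentiable at x₀ with derivative Df(x₀) ∈ X* and is Lipschitz with constant K_f > 0 on some ball B(x₀, r); g is Gâteaux differentiable at x₀ with derivative Dg(x₀) : X → Y a continuous linear map; the system is calm at x₀, i.e. there exist a > 0 and s > 0 such that dist(x, g⁻¹(0) ∩ C) ≤ a‖g(x)‖ for all x ∈ B(x₀, s) ∩ C; and x₀ lies in the topological interior of C. Then there exists y* ∈ Y* with ‖y*‖ ≤ K_f · a such that Df(x₀) + y* ∘ Dg(x₀) = 0 in X*. -/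
open Filter Metric Topology Set

noncomputable section

/-- `g` is Gâteaux differentiable at `x` with (continuous linear) derivative `D`:
for every direction `h`, the difference quotients converge as `τ → 0⁺`. -/
def GateauxAt {X Y : Type*} [NormedAddCommGroup X] [NormedSpace ℝ X]
    [NormedAddCommGroup Y] [NormedSpace ℝ Y] (g : X → Y) (x : X) (D : X →L[ℝ] Y) : Prop :=
  ∀ h : X, Tendsto (fun τ : ℝ => τ⁻¹ • (g (x + τ • h) - g x)) (𝓝[>] (0:ℝ)) (𝓝 (D h))

theorem stmt0 {X Y : Type*} [NormedAddCommGroup X] [NormedSpace ℝ X] [CompleteSpace X]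
    [NormedAddCommGroup Y] [NormedSpace ℝ Y] [CompleteSpace Y]
    (C : Set X) (hCne : C.Nonempty) (hCcl : IsClosed C)
    (f : X → ℝ) (g : X → Y) (x₀ : X) (hx₀C : x₀ ∈ C) (hgx₀ : g x₀ = 0)
    -- x₀ is a local minimizer of f over {x ∈ C : g x = 0}
    (hmin : ∃ ε > 0, ∀ x ∈ C, g x = 0 → ‖x - x₀‖ ≤ ε → f x₀ ≤ f x)
    -- f is Gâteaux differentiable at x₀ and Lipschitz with constant Kf on a ball around x₀
    (Df : X →L[ℝ] ℝ) (hDf : GateauxAt f x₀ Df)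
    (Kf : ℝ) (hKf : 0 < Kf)
    (hfLip : ∃ r > 0, ∀ x ∈ closedBall x₀ r, ∀ x' ∈ closedBall x₀ r,
      |f x - f x'| ≤ Kf * ‖x - x'‖)
    -- g is Gâteaux differentiable at x₀
    (Dg : X →L[ℝ] Y) (hDg : GateauxAt g x₀ Dg)
    -- calmness of the system `g x = 0, x ∈ C` at x₀
    (a : ℝ) (ha : 0 < a) (s : ℝ) (hs : 0 < s)
    (hcalm : ∀ x ∈ closedBall x₀ s ∩ C, infDist x (g ⁻¹' {0} ∩ C) ≤ a * ‖g x‖)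
    -- x₀ lies in the interior of C
    (hint : x₀ ∈ interior C) :
    ∃ ystar : Y →L[ℝ] ℝ, ‖ystar‖ ≤ Kf * a ∧ Df + ystar.comp Dg = 0 := by
  obtain ⟨ε, hε, hminloc⟩ := hmin
  obtain ⟨r, hr, hLip⟩ := hfLip
  obtain ⟨ρ, hρ, hball⟩ := Metric.isOpen_iff.mp isOpen_interior x₀ hint
  have hballC : ball x₀ ρ ⊆ C := hball.trans interior_subset
  set S : Set X := g ⁻¹' {0} ∩ C with hS
  have hSne : S.Nonempty := ⟨x₀, by simp [hS, hgx₀], hx₀C⟩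
  -- Key inequality: for every direction h, -(Df h) ≤ Kf * a * ‖Dg h‖
  have key : ∀ h : X, -(Df h) ≤ Kf * a * ‖Dg h‖ := by
    intro h
    have hGt : Tendsto (fun τ : ℝ => ‖τ⁻¹ • (g (x₀ + τ • h) - g x₀)‖)
        (𝓝[>] (0:ℝ)) (𝓝 ‖Dg h‖) := (hDg h).norm
    have hbnd : ∀ᶠ τ in 𝓝[>] (0:ℝ),
        ‖τ⁻¹ • (g (x₀ + τ • h) - g x₀)‖ ≤ ‖Dg h‖ + 1 :=
      hGt.eventually (eventually_le_nhds (lt_add_one _))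
    set M : ℝ := ‖h‖ + a * (‖Dg h‖ + 1) + 1 with hM
    have hMpos : 0 < M := by positivity
    have hhM : ‖h‖ ≤ M := by nlinarith [norm_nonneg (Dg h), norm_nonneg h]
    set m : ℝ := min r (min ε (min s ρ)) with hm
    have hmpos : 0 < m := lt_min hr (lt_min hε (lt_min hs hρ))
    set δ : ℝ := min 1 (m / M) with hδdef
    have hδpos : 0 < δ := lt_min one_pos (div_pos hmpos hMpos)
    have hIoo : Ioo (0:ℝ) δ ∈ 𝓝[>] (0:ℝ) :=
      Ioo_mem_nhdsGT_of_mem ⟨le_refl (0:ℝ), hδpos⟩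
    have hev : ∀ᶠ τ in 𝓝[>] (0:ℝ),
        -(τ⁻¹ • (f (x₀ + τ • h) - f x₀)) ≤
          Kf * a * ‖τ⁻¹ • (g (x₀ + τ • h) - g x₀)‖ + Kf * τ := by
      filter_upwards [hbnd, eventually_of_mem hIoo (fun τ hτ => hτ)] with τ hbτ hτIoo
      obtain ⟨hτpos, hτδ⟩ := hτIoo
      set xτ := x₀ + τ • h with hxτ
      have hτ1 : τ ≤ 1 := hτδ.le.trans (min_le_left _ _)
      have hτM : τ * M < m := by
        have h1 : τ < m / M := lt_of_lt_of_le hτδ (min_le_right _ _)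
        calc τ * M < (m / M) * M := mul_lt_mul_of_pos_right h1 hMpos
          _ = m := by field_simp
      have hdist : dist xτ x₀ = τ * ‖h‖ := by
        rw [hxτ, dist_eq_norm, add_sub_cancel_left, norm_smul, Real.norm_eq_abs,
          abs_of_pos hτpos]
      have hτh_le : τ * ‖h‖ ≤ τ * M := mul_le_mul_of_nonneg_left hhM hτpos.le
      -- bound on ‖g xτ‖
      have hgnorm : ‖τ⁻¹ • (g xτ - g x₀)‖ = τ⁻¹ * ‖g xτ‖ := by
        rw [hgx₀, sub_zero, norm_smul, Real.norm_eq_abs, abs_of_pos (inv_pos.mpr hτpos)]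
      have hgτ : ‖g xτ‖ ≤ τ * (‖Dg h‖ + 1) := by
        have hb := hbτ
        rw [hgnorm] at hb
        calc ‖g xτ‖ = τ * (τ⁻¹ * ‖g xτ‖) := by field_simp
          _ ≤ τ * (‖Dg h‖ + 1) := mul_le_mul_of_nonneg_left hb hτpos.le
      -- xτ ∈ C and in the calmness ball
      have hmr : m ≤ r := min_le_left _ _
      have hmε : m ≤ ε := le_trans (min_le_right _ _) (min_le_left _ _)
      have hms : m ≤ s := le_trans (min_le_right _ _)
        (le_trans (min_le_right _ _) (min_le_left _ _))
      have hmρ : m ≤ ρ := le_trans (min_le_right _ _)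
        (le_trans (min_le_right _ _) (min_le_right _ _))
      have hxτC : xτ ∈ C := by
        apply hballC
        rw [mem_ball, hdist]
        exact lt_of_le_of_lt hτh_le (lt_of_lt_of_le hτM hmρ)
      have hxτs : xτ ∈ closedBall x₀ s := by
        rw [mem_closedBall, hdist]
        exact le_trans hτh_le (le_trans hτM.le hms)
      -- choose an approximate projection z of xτ onto S
      have hinf : infDist xτ S < a * ‖g xτ‖ + τ * τ := by
        have := hcalm xτ ⟨hxτs, hxτC⟩
        nlinarith
      obtain ⟨z, hzS, hzd⟩ := (infDist_lt_iff hSne).mp hinf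
      have hzgz : g z = 0 := hzS.1
      have hzC : z ∈ C := hzS.2
      have hzxτ : dist xτ z ≤ a * ‖g xτ‖ + τ * τ := hzd.le
      have hzx₀ : dist z x₀ ≤ τ * M := by
        calc dist z x₀ ≤ dist z xτ + dist xτ x₀ := dist_triangle _ _ _
          _ ≤ (a * ‖g xτ‖ + τ * τ) + τ * ‖h‖ := by
              rw [dist_comm z xτ]; exact add_le_add hzxτ hdist.le
          _ ≤ (a * (τ * (‖Dg h‖ + 1)) + τ * 1) + τ * ‖h‖ := by
              have h1 : a * ‖g xτ‖ ≤ a * (τ * (‖Dg h‖ + 1)) :=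
                mul_le_mul_of_nonneg_left hgτ ha.le
              have h2 : τ * τ ≤ τ * 1 := mul_le_mul_of_nonneg_left hτ1 hτpos.le
              linarith
          _ = τ * M := by rw [hM]; ring
      -- minimality at z
      have hfz : f x₀ ≤ f z := by
        apply hminloc z hzC hzgz
        rw [← dist_eq_norm]
        exact hzx₀.trans (hτM.le.trans hmε)
      -- Lipschitz bound between z and xτ
      have hzball : z ∈ closedBall x₀ r := by
        rw [mem_closedBall]
        exact hzx₀.trans (hτM.le.trans hmr)
      have hxτball : xτ ∈ closedBall x₀ r := by
        rw [mem_closedBall, hdist]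
        exact le_trans hτh_le (hτM.le.trans hmr)
      have hLipzx : |f z - f xτ| ≤ Kf * ‖z - xτ‖ := hLip z hzball xτ hxτball
      have hfzx : f z - f xτ ≤ Kf * (a * ‖g xτ‖ + τ * τ) := by
        calc f z - f xτ ≤ |f z - f xτ| := le_abs_self _
          _ ≤ Kf * ‖z - xτ‖ := hLipzx
          _ ≤ Kf * (a * ‖g xτ‖ + τ * τ) := by
              apply mul_le_mul_of_nonneg_left _ hKf.le
              rw [← dist_eq_norm, dist_comm]
              exact hzxτ
      have hmain : f x₀ - f xτ ≤ Kf * (a * ‖g xτ‖ + τ * τ) := by linarith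
      -- divide by τ
      rw [smul_eq_mul, hgnorm]
      have hτinv : 0 < τ⁻¹ := inv_pos.mpr hτpos
      have := mul_le_mul_of_nonneg_left hmain hτinv.le
      calc -(τ⁻¹ * (f xτ - f x₀)) = τ⁻¹ * (f x₀ - f xτ) := by ring
        _ ≤ τ⁻¹ * (Kf * (a * ‖g xτ‖ + τ * τ)) := this
        _ = Kf * a * (τ⁻¹ * ‖g xτ‖) + Kf * (τ⁻¹ * τ) * τ := by ring
        _ = Kf * a * (τ⁻¹ * ‖g xτ‖) + Kf * τ := by
              rw [inv_mul_cancel₀ (ne_of_gt hτpos), mul_one]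
    -- take the limit τ → 0⁺
    have hL : Tendsto (fun τ : ℝ => -(τ⁻¹ • (f (x₀ + τ • h) - f x₀)))
        (𝓝[>] (0:ℝ)) (𝓝 (-(Df h))) := (hDf h).neg
    have hR : Tendsto (fun τ : ℝ =>
        Kf * a * ‖τ⁻¹ • (g (x₀ + τ • h) - g x₀)‖ + Kf * τ)
        (𝓝[>] (0:ℝ)) (𝓝 (Kf * a * ‖Dg h‖ + Kf * 0)) := by
      apply Tendsto.add (hGt.const_mul _)
      exact ((continuous_const.mul continuous_id).tendsto 0).mono_left nhdsWithin_le_nhds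
    have := le_of_tendsto_of_tendsto hL hR hev
    simpa using this
  have keyabs : ∀ h : X, |Df h| ≤ Kf * a * ‖Dg h‖ := by
    intro h
    rw [abs_le]
    constructor
    · linarith [key h]
    · have := key (-h)
      rw [map_neg, map_neg, norm_neg, neg_neg] at this
      exact this
  -- Build the multiplier via Hahn–Banach on the range of Dg
  set Dgl : X →ₗ[ℝ] Y := (Dg : X →ₗ[ℝ] Y) with hDgl
  have hker : LinearMap.ker Dgl ≤ LinearMap.ker (-(Df : X →ₗ[ℝ] ℝ)) := by
    intro x hx
    have hx0 : Dg x = 0 := hx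
    have h2 := keyabs x
    rw [hx0, norm_zero, mul_zero] at h2
    have : Df x = 0 := abs_nonpos_iff.mp h2
    simp [LinearMap.mem_ker, this]
  set q : (X ⧸ LinearMap.ker Dgl) →ₗ[ℝ] ℝ :=
    (LinearMap.ker Dgl).liftQ (-(Df : X →ₗ[ℝ] ℝ)) hker with hq
  set e := Dgl.quotKerEquivRange with he
  set ψlin : ↥(LinearMap.range Dgl) →ₗ[ℝ] ℝ := q.comp (e.symm : _ →ₗ[ℝ] _) with hψ
  have hψval : ∀ (x : X) (hx : Dg x ∈ LinearMap.range Dgl),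
      ψlin ⟨Dg x, hx⟩ = -(Df x) := by
    intro x hx
    have heq : e (Submodule.Quotient.mk x) = ⟨Dg x, hx⟩ :=
      Subtype.ext (Dgl.quotKerEquivRange_apply_mk x)
    have hsymm : e.symm ⟨Dg x, hx⟩ = Submodule.Quotient.mk x :=
      e.symm_apply_eq.mpr heq.symm
    show q (e.symm ⟨Dg x, hx⟩) = -(Df x)
    rw [hsymm, hq, Submodule.liftQ_apply]
    simp
  have hψbound : ∀ y : ↥(LinearMap.range Dgl), ‖ψlin y‖ ≤ (Kf * a) * ‖y‖ := by
    rintro ⟨y, hy⟩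
    obtain ⟨x, rfl⟩ := hy
    show ‖ψlin ⟨Dg x, LinearMap.mem_range_self Dgl x⟩‖ ≤ (Kf * a) * ‖Dg x‖
    rw [hψval x (LinearMap.mem_range_self Dgl x), Real.norm_eq_abs, abs_neg]
    exact keyabs x
  set ψ := ψlin.mkContinuous (Kf * a) hψbound with hψc
  obtain ⟨ystar, hext, hnorm⟩ := exists_extension_norm_eq (LinearMap.range Dgl) ψ
  refine ⟨ystar, ?_, ?_⟩
  · rw [hnorm]
    exact ψlin.mkContinuous_norm_le (by positivity) hψbound
  · ext x
    have h1 : ystar (Dg x) = ψ ⟨Dg x, LinearMap.mem_range_self _ x⟩ :=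
      hext ⟨Dg x, LinearMap.mem_range_self _ x⟩
    have h2 : ψ ⟨Dg x, LinearMap.mem_range_self _ x⟩ = -(Df x) :=
      hψval x (LinearMap.mem_range_self _ x)
    simp only [ContinuousLinearMap.add_apply, ContinuousLinearMap.comp_apply,
      ContinuousLinearMap.zero_apply]
    rw [h1, h2]
    ring
end
end

section
/- Let X and Y be real Banach spaces, C a nonempty closed subset of X, f : X → ℝ and g : X → Y, and let x₀ ∈ C with g(x₀) = 0 be a local minimizer of f over {x ∈ C : g(x) = 0}. Assume: f is Gâteaux differentiable at x₀ and Lipschitz with constant K_f > 0 near x₀; g is Gâteaux differentiable at x₀ and Lipschitz with constant K_g > 0 near x₀; and the system is calm at x₀ with constant a > 0, i.e. dist(x, g⁻¹(0) ∩ C) ≤ a‖g(x)‖ for all x ∈ B(x₀, s) ∩ C for some s > 0. Then for every h ∈ X: Df(x₀)h + K_f·a·‖Dg(x₀)h‖ + K_f·(1 + K_g·a)·d⁻_C(x₀; h) ≥ 0, where d⁻_C(x₀; h) := liminf_{τ→0⁺} dist(x₀ + τh, C)/τ. -/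
open Filter Metric Topology Set

noncomputable section

/-- Lower Dini directional derivative of the distance function to `A` at `x`
in the direction `h`: `liminf_{τ→0⁺} dist(x + τ h, A)/τ`. -/
def lowerDini {X : Type*} [NormedAddCommGroup X] [NormedSpace ℝ X]
    (A : Set X) (x h : X) : ℝ :=
  liminf (fun τ : ℝ => infDist (x + τ • h) A / τ) (𝓝[>] (0:ℝ))

theorem stmt1 {X Y : Type*} [NormedAddCommGroup X] [NormedSpace ℝ X] [CompleteSpace X]
    [NormedAddCommGroup Y] [NormedSpace ℝ Y] [CompleteSpace Y]
    (C : Set X) (hCne : C.Nonempty) (hCcl : IsClosed C)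
    (f : X → ℝ) (g : X → Y) (x₀ : X) (hx₀C : x₀ ∈ C) (hgx₀ : g x₀ = 0)
    -- x₀ is a local minimizer of f over {x ∈ C : g x = 0}
    (hmin : ∃ ε > 0, ∀ x ∈ C, g x = 0 → ‖x - x₀‖ ≤ ε → f x₀ ≤ f x)
    -- f is Gâteaux differentiable at x₀ and Lipschitz with constant Kf near x₀
    (Df : X →L[ℝ] ℝ) (hDf : GateauxAt f x₀ Df)
    (Kf : ℝ) (hKf : 0 < Kf)
    (hfLip : ∃ r > 0, ∀ x ∈ closedBall x₀ r, ∀ x' ∈ closedBall x₀ r,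
      |f x - f x'| ≤ Kf * ‖x - x'‖)
    -- g is Gâteaux differentiable at x₀ and Lipschitz with constant Kg near x₀
    (Dg : X →L[ℝ] Y) (hDg : GateauxAt g x₀ Dg)
    (Kg : ℝ) (hKg : 0 < Kg)
    (hgLip : ∃ r > 0, ∀ x ∈ closedBall x₀ r, ∀ x' ∈ closedBall x₀ r,
      ‖g x - g x'‖ ≤ Kg * ‖x - x'‖)
    -- calmness of the system `g x = 0, x ∈ C` at x₀ with constant a
    (a : ℝ) (ha : 0 < a) (s : ℝ) (hs : 0 < s)
    (hcalm : ∀ x ∈ closedBall x₀ s ∩ C, infDist x (g ⁻¹' {0} ∩ C) ≤ a * ‖g x‖) :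
    ∀ h : X, 0 ≤ Df h + Kf * a * ‖Dg h‖ + Kf * (1 + Kg * a) * lowerDini C x₀ h := by
  intro h
  obtain ⟨εm, hεm, hminb⟩ := hmin
  obtain ⟨rf, hrf, hfL⟩ := hfLip
  obtain ⟨rg, hrg, hgL⟩ := hgLip
  obtain ⟨L, hLdef⟩ : ∃ L, L = lowerDini C x₀ h := ⟨_, rfl⟩
  rw [← hLdef]
  -- boundedness facts for the liminf
  have hub : ∀ᶠ τ in 𝓝[>] (0:ℝ), infDist (x₀ + τ • h) C / τ ≤ ‖h‖ := by
    filter_upwards [self_mem_nhdsWithin] with τ (hτ : 0 < τ)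
    rw [div_le_iff₀ hτ]
    calc infDist (x₀ + τ • h) C ≤ dist (x₀ + τ • h) x₀ := infDist_le_dist_of_mem hx₀C
      _ = τ * ‖h‖ := by
          rw [dist_eq_norm]
          simp [norm_smul, abs_of_pos hτ]
      _ = ‖h‖ * τ := mul_comm _ _
  have hbdd : IsBoundedUnder (· ≤ ·) (𝓝[>] (0:ℝ)) (fun τ => infDist (x₀ + τ • h) C / τ) :=
    ⟨‖h‖, by simpa [eventually_map] using hub⟩
  have hcobdd : IsCoboundedUnder (· ≥ ·) (𝓝[>] (0:ℝ))
      (fun τ => infDist (x₀ + τ • h) C / τ) := hbdd.isCoboundedUnder_ge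
  have hnn : ∀ᶠ τ in 𝓝[>] (0:ℝ), (0:ℝ) ≤ infDist (x₀ + τ • h) C / τ := by
    filter_upwards [self_mem_nhdsWithin] with τ (hτ : 0 < τ)
    exact div_nonneg infDist_nonneg hτ.le
  have hL0 : 0 ≤ L := by
    rw [hLdef]
    exact le_liminf_of_le hcobdd hnn
  -- the feasible set is nonempty
  have hSne : (g ⁻¹' {0} ∩ C).Nonempty := ⟨x₀, by simp [hgx₀], hx₀C⟩
  obtain ⟨T, hTdef⟩ : ∃ T, T = Df h + Kf * a * ‖Dg h‖ + Kf * (1 + Kg * a) * L := ⟨_, rfl⟩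
  obtain ⟨Cst, hCstdef⟩ : ∃ c, c = 1 + Kf * a * (1 + 2 * Kg) + 3 * Kf := ⟨_, rfl⟩
  have hCstpos : 0 < Cst := by rw [hCstdef]; positivity
  rw [← hTdef]
  suffices key : ∀ ε : ℝ, 0 < ε → 0 ≤ T + ε * Cst by
    have h0 : ∀ δ : ℝ, 0 < δ → 0 ≤ T + δ := by
      intro δ hδ
      have := key (δ / Cst) (by positivity)
      have h2 : δ / Cst * Cst = δ := div_mul_cancel₀ _ (ne_of_gt hCstpos)
      linarith
    by_contra hT
    push_neg at hT
    have := h0 (-T / 2) (by linarith)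
    linarith
  intro ε hε
  -- constants controlling how far the auxiliary points can be from x₀
  obtain ⟨M, hMdef⟩ : ∃ M, M = ‖h‖ + L + 2 * ε := ⟨_, rfl⟩
  have hMpos : 0 < M := by rw [hMdef]; have := norm_nonneg h; linarith
  obtain ⟨M', hM'def⟩ : ∃ M', M' = M * (1 + a * Kg) + ε := ⟨_, rfl⟩
  have haKg : (0:ℝ) < 1 + a * Kg := by nlinarith [mul_pos ha hKg]
  have hM'pos : 0 < M' := by rw [hM'def]; nlinarith [mul_pos hMpos haKg]
  have hMM' : M ≤ M' := by rw [hM'def]; nlinarith [mul_pos hMpos (mul_pos ha hKg)]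
  obtain ⟨ρ, hρdef⟩ : ∃ ρ, ρ = min (min s rf) (min rg εm) := ⟨_, rfl⟩
  have hρpos : 0 < ρ := by
    rw [hρdef]
    simp only [lt_min_iff]
    exact ⟨⟨hs, hrf⟩, ⟨hrg, hεm⟩⟩
  have hρs : ρ ≤ s := hρdef ▸ le_trans (min_le_left _ _) (min_le_left _ _)
  have hρrf : ρ ≤ rf := hρdef ▸ le_trans (min_le_left _ _) (min_le_right _ _)
  have hρrg : ρ ≤ rg := hρdef ▸ le_trans (min_le_right _ _) (min_le_left _ _)
  have hρεm : ρ ≤ εm := hρdef ▸ le_trans (min_le_right _ _) (min_le_right _ _)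
  obtain ⟨δ, hδdef⟩ : ∃ δ, δ = ρ / M' := ⟨_, rfl⟩
  have hδpos : 0 < δ := by rw [hδdef]; exact div_pos hρpos hM'pos
  -- eventual facts along τ → 0⁺
  have E2 : ∀ᶠ τ in 𝓝[>] (0:ℝ),
      f (x₀ + τ • h) - f x₀ ≤ τ * (Df h + ε) := by
    have := (hDf h).eventually_lt_const (show Df h < Df h + ε by linarith)
    filter_upwards [this, self_mem_nhdsWithin] with τ hτ1 (hτ : 0 < τ)
    have h1 : τ⁻¹ • (f (x₀ + τ • h) - f x₀) < Df h + ε := hτ1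
    rw [smul_eq_mul] at h1
    calc f (x₀ + τ • h) - f x₀ = τ * (τ⁻¹ * (f (x₀ + τ • h) - f x₀)) := by
          field_simp
      _ ≤ τ * (Df h + ε) := mul_le_mul_of_nonneg_left h1.le hτ.le
  have E3 : ∀ᶠ τ in 𝓝[>] (0:ℝ), ‖g (x₀ + τ • h)‖ ≤ τ * (‖Dg h‖ + ε) := by
    have hgt := (hDg h).norm
    have := hgt.eventually_lt_const (show ‖Dg h‖ < ‖Dg h‖ + ε by linarith)
    filter_upwards [this, self_mem_nhdsWithin] with τ hτ1 (hτ : 0 < τ)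
    have h2 : ‖τ⁻¹ • (g (x₀ + τ • h) - g x₀)‖ = τ⁻¹ * ‖g (x₀ + τ • h)‖ := by
      rw [hgx₀, sub_zero, norm_smul, Real.norm_eq_abs, abs_of_pos (inv_pos.2 hτ)]
    rw [h2] at hτ1
    calc ‖g (x₀ + τ • h)‖ = τ * (τ⁻¹ * ‖g (x₀ + τ • h)‖) := by field_simp
      _ ≤ τ * (‖Dg h‖ + ε) := mul_le_mul_of_nonneg_left hτ1.le hτ.le
  have E4 : ∀ᶠ τ in 𝓝[>] (0:ℝ), τ ∈ Ioo (0:ℝ) δ :=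
    Ioo_mem_nhdsGT_of_mem ⟨le_refl 0, hδpos⟩
  -- frequently, the distance quotient is below L + ε
  have hliml : liminf (fun τ : ℝ => infDist (x₀ + τ • h) C / τ) (𝓝[>] (0:ℝ)) < L + ε := by
    unfold lowerDini at hLdef
    rw [← hLdef]
    linarith
  have hfreq : ∃ᶠ τ in 𝓝[>] (0:ℝ), infDist (x₀ + τ • h) C / τ < L + ε :=
    frequently_lt_of_liminf_lt hcobdd hliml
  obtain ⟨τ, hdq, hE2, hE3, hτmem⟩ := (hfreq.and_eventually (E2.and (E3.and E4))).exists
  obtain ⟨hτpos, hτδ⟩ := hτmem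
  -- basic distance bound
  have hD : infDist (x₀ + τ • h) C < τ * (L + ε) := by
    rwa [div_lt_iff₀ hτpos, mul_comm] at hdq
  -- choose c ∈ C close to x₀ + τ h
  have hc : ∃ c ∈ C, dist (x₀ + τ • h) c < τ * (L + 2 * ε) := by
    rw [← infDist_lt_iff hCne]
    have he : τ * (L + 2 * ε) = τ * (L + ε) + τ * ε := by ring
    linarith [mul_pos hτpos hε]
  obtain ⟨c, hcC, hcdist⟩ := hc
  have hcnorm : ‖x₀ + τ • h - c‖ < τ * (L + 2 * ε) := by
    rwa [← dist_eq_norm]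
  have hcxτ : ‖c - (x₀ + τ • h)‖ < τ * (L + 2 * ε) := by rwa [norm_sub_rev]
  have hτh : ‖τ • h‖ = τ * ‖h‖ := by
    simp [norm_smul, abs_of_pos hτpos]
  -- c is within τ * M of x₀
  have hcx₀ : ‖c - x₀‖ ≤ τ * M := by
    have e : c - x₀ = (c - (x₀ + τ • h)) + τ • h := by abel
    have h1 : ‖c - x₀‖ ≤ ‖c - (x₀ + τ • h)‖ + ‖τ • h‖ := by
      rw [e]; exact norm_add_le _ _
    have h2 : τ * M = τ * (L + 2 * ε) + τ * ‖h‖ := by rw [hMdef]; ring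
    rw [hτh] at h1
    linarith
  have hτM'ρ : τ * M' ≤ ρ := by
    have h1 : τ * M' ≤ δ * M' := mul_le_mul_of_nonneg_right hτδ.le hM'pos.le
    rw [hδdef, div_mul_cancel₀ _ (ne_of_gt hM'pos)] at h1
    exact h1
  have hτMρ : τ * M ≤ ρ :=
    le_trans (mul_le_mul_of_nonneg_left hMM' hτpos.le) hτM'ρ
  have hcball : ∀ r : ℝ, ρ ≤ r → c ∈ closedBall x₀ r := fun r hr => by
    rw [mem_closedBall, dist_eq_norm]
    exact le_trans hcx₀ (le_trans hτMρ hr)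
  have hx₀ball : ∀ r : ℝ, ρ ≤ r → x₀ ∈ closedBall x₀ r := fun r hr => by
    simp only [mem_closedBall, dist_self]
    linarith
  have hxτball : ∀ r : ℝ, ρ ≤ r → x₀ + τ • h ∈ closedBall x₀ r := fun r hr => by
    rw [mem_closedBall, dist_eq_norm, add_sub_cancel_left, hτh]
    have : τ * ‖h‖ ≤ τ * M := by
      apply mul_le_mul_of_nonneg_left _ hτpos.le
      rw [hMdef]; linarith
    linarith
  -- bound on ‖g c‖ via x₀ (for locating z)
  have hgc_x₀ : ‖g c‖ ≤ Kg * (τ * M) := by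
    have h1 := hgL c (hcball rg hρrg) x₀ (hx₀ball rg hρrg)
    rw [hgx₀, sub_zero] at h1
    exact le_trans h1 (mul_le_mul_of_nonneg_left hcx₀ hKg.le)
  -- bound on ‖g c‖ via x₀ + τ h (for the main estimate)
  have hgc : ‖g c‖ ≤ τ * (‖Dg h‖ + ε) + Kg * (τ * (L + 2 * ε)) := by
    have h1 := hgL c (hcball rg hρrg) (x₀ + τ • h) (hxτball rg hρrg)
    have h2 := norm_sub_norm_le (g c) (g (x₀ + τ • h))
    have h3 : Kg * ‖c - (x₀ + τ • h)‖ ≤ Kg * (τ * (L + 2 * ε)) :=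
      mul_le_mul_of_nonneg_left hcxτ.le hKg.le
    linarith
  -- calmness at c
  have hcalmc : infDist c (g ⁻¹' {0} ∩ C) ≤ a * ‖g c‖ :=
    hcalm c ⟨hcball s hρs, hcC⟩
  -- choose z ∈ g⁻¹(0) ∩ C close to c
  have hz : ∃ z ∈ g ⁻¹' {0} ∩ C, dist c z < a * ‖g c‖ + ε * τ := by
    rw [← infDist_lt_iff hSne]
    linarith [mul_pos hε hτpos]
  obtain ⟨z, ⟨hzg, hzC⟩, hzdist⟩ := hz
  have hzg0 : g z = 0 := hzg
  have hzcnorm : ‖z - c‖ < a * ‖g c‖ + ε * τ := by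
    rw [norm_sub_rev, ← dist_eq_norm]; exact hzdist
  -- z is within τ * M' of x₀
  have hzx₀ : ‖z - x₀‖ ≤ τ * M' := by
    have e : z - x₀ = (z - c) + (c - x₀) := by abel
    have h1 : ‖z - x₀‖ ≤ ‖z - c‖ + ‖c - x₀‖ := by rw [e]; exact norm_add_le _ _
    have h2 : a * ‖g c‖ ≤ a * (Kg * (τ * M)) := mul_le_mul_of_nonneg_left hgc_x₀ ha.le
    have h3 : τ * M' = τ * M + a * (Kg * (τ * M)) + ε * τ := by rw [hM'def]; ring
    linarith
  -- apply local minimality at z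
  have hfz : f x₀ ≤ f z := hminb z hzC hzg0 (le_trans hzx₀ (le_trans hτM'ρ hρεm))
  -- Lipschitz estimates for f
  have hzball : z ∈ closedBall x₀ rf := by
    rw [mem_closedBall, dist_eq_norm]
    exact le_trans hzx₀ (le_trans hτM'ρ hρrf)
  have hf1 : f z - f c ≤ Kf * ‖z - c‖ :=
    le_trans (le_abs_self _) (hfL z hzball c (hcball rf hρrf))
  have hf2 : f c - f (x₀ + τ • h) ≤ Kf * ‖c - (x₀ + τ • h)‖ :=
    le_trans (le_abs_self _) (hfL c (hcball rf hρrf) (x₀ + τ • h) (hxτball rf hρrf))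
  -- assemble everything
  have b1 : f z - f c ≤ Kf * (a * ‖g c‖ + ε * τ) :=
    le_trans hf1 (mul_le_mul_of_nonneg_left hzcnorm.le hKf.le)
  have b2 : f c - f (x₀ + τ • h) ≤ Kf * (τ * (L + 2 * ε)) :=
    le_trans hf2 (mul_le_mul_of_nonneg_left hcxτ.le hKf.le)
  have bgc : Kf * (a * ‖g c‖ + ε * τ) ≤
      Kf * (a * (τ * (‖Dg h‖ + ε) + Kg * (τ * (L + 2 * ε))) + ε * τ) := by
    apply mul_le_mul_of_nonneg_left _ hKf.le
    have := mul_le_mul_of_nonneg_left hgc ha.le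
    linarith
  have heq : τ * (T + ε * Cst) =
      Kf * (a * (τ * (‖Dg h‖ + ε) + Kg * (τ * (L + 2 * ε))) + ε * τ)
        + Kf * (τ * (L + 2 * ε)) + τ * (Df h + ε) := by
    rw [hTdef, hCstdef]; ring
  have main : τ * 0 ≤ τ * (T + ε * Cst) := by
    rw [heq]
    linarith
  exact le_of_mul_le_mul_left main hτpos
end
end

section
/- Let X and Y be real Banach spaces, C a nonempty closed subset of X, f : X → ℝ and g : X → Y, and let x₀ ∈ C with g(x₀) = 0 be a local minimizer of f over {x ∈ C : g(x) = 0}. Assume: f is Gâteaux differentiable at x₀ and Lipschitz with constant K_f > 0 near x₀; g is Gâteaux differentiable at x₀ and Lipschitz with constant K_g > 0 near x₀; the system is calm at x₀ with constant a > 0; and the contingent cone K(C, x₀) is convex. Then there exist y* ∈ Y* with ‖y*‖ ≤ K_f·a and x* ∈ X* satisfying ⟨x*, h⟩ ≤ 0 for all h ∈ K(C, x₀), such that Df(x₀) + y* ∘ Dg(x₀) + x* = 0 in X*. -/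
open Filter Metric Topology Set

noncomputable section

/-- The contingent (Bouligand) tangent cone to `A` at `x`. -/
def contingentCone {X : Type*} [NormedAddCommGroup X] [NormedSpace ℝ X]
    (A : Set X) (x : X) : Set X :=
  {h | lowerDini A x h = 0}

set_option maxHeartbeats 1000000

theorem stmt2 {X Y : Type*} [NormedAddCommGroup X] [NormedSpace ℝ X] [CompleteSpace X]
    [NormedAddCommGroup Y] [NormedSpace ℝ Y] [CompleteSpace Y]
    (C : Set X) (hCne : C.Nonempty) (hCcl : IsClosed C)
    (f : X → ℝ) (g : X → Y) (x₀ : X) (hx₀C : x₀ ∈ C) (hgx₀ : g x₀ = 0)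
    -- x₀ is a local minimizer of f over {x ∈ C : g x = 0}
    (hmin : ∃ ε > 0, ∀ x ∈ C, g x = 0 → ‖x - x₀‖ ≤ ε → f x₀ ≤ f x)
    -- f is Gâteaux differentiable at x₀ and Lipschitz with constant Kf near x₀
    (Df : X →L[ℝ] ℝ) (hDf : GateauxAt f x₀ Df)
    (Kf : ℝ) (hKf : 0 < Kf)
    (hfLip : ∃ r > 0, ∀ x ∈ closedBall x₀ r, ∀ x' ∈ closedBall x₀ r,
      |f x - f x'| ≤ Kf * ‖x - x'‖)
    -- g is Gâteaux differentiable at x₀ and Lipschitz with constant Kg near x₀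
    (Dg : X →L[ℝ] Y) (hDg : GateauxAt g x₀ Dg)
    (Kg : ℝ) (hKg : 0 < Kg)
    (hgLip : ∃ r > 0, ∀ x ∈ closedBall x₀ r, ∀ x' ∈ closedBall x₀ r,
      ‖g x - g x'‖ ≤ Kg * ‖x - x'‖)
    -- calmness of the system `g x = 0, x ∈ C` at x₀ with constant a
    (a : ℝ) (ha : 0 < a) (s : ℝ) (hs : 0 < s)
    (hcalm : ∀ x ∈ closedBall x₀ s ∩ C, infDist x (g ⁻¹' {0} ∩ C) ≤ a * ‖g x‖)
    -- the contingent cone K(C, x₀) is convex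
    (hconv : Convex ℝ (contingentCone C x₀)) :
    ∃ ystar : Y →L[ℝ] ℝ, ∃ xstar : X →L[ℝ] ℝ,
      ‖ystar‖ ≤ Kf * a ∧
      (∀ h ∈ contingentCone C x₀, xstar h ≤ 0) ∧
      Df + ystar.comp Dg + xstar = 0 := by
  obtain ⟨ε₀, hε₀, hmin⟩ := hmin
  obtain ⟨rf, hrf, hfL⟩ := hfLip
  obtain ⟨rg, hrg, hgL⟩ := hgLip
  set c := Kf * a with hc_def
  have hc : 0 < c := mul_pos hKf ha
  have hx₀S : x₀ ∈ g ⁻¹' {0} ∩ C := ⟨hgx₀, hx₀C⟩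
  have hSne : (g ⁻¹' {0} ∩ C).Nonempty := ⟨x₀, hx₀S⟩
  -- Step 0: exact penalty estimate
  obtain ⟨δ, hδ, hpen⟩ : ∃ δ > 0, ∀ x ∈ C, ‖x - x₀‖ ≤ δ → f x₀ ≤ f x + c * ‖g x‖ := by
    refine ⟨min s (min (ε₀/3) (rf/3)), by positivity, fun x hxC hxδ => ?_⟩
    set δ := min s (min (ε₀/3) (rf/3)) with hδdef
    have hδpos : 0 < δ := by positivity
    have hδs : δ ≤ s := min_le_left _ _
    have hδε : δ ≤ ε₀/3 := (min_le_right _ _).trans (min_le_left _ _)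
    have hδr : δ ≤ rf/3 := (min_le_right _ _).trans (min_le_right _ _)
    have hcal : infDist x (g ⁻¹' {0} ∩ C) ≤ a * ‖g x‖ :=
      hcalm x ⟨mem_closedBall_iff_norm.mpr (hxδ.trans hδs), hxC⟩
    refine le_of_forall_pos_le_add (fun η hη => ?_)
    set η' := min δ (η/Kf) with hη'def
    have hη'pos : 0 < η' := lt_min hδpos (div_pos hη hKf)
    obtain ⟨x', hx'S, hx'd⟩ := (infDist_lt_iff hSne).mp
      (lt_add_of_pos_right (infDist x (g ⁻¹' {0} ∩ C)) hη'pos)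
    have hinf2 : infDist x (g ⁻¹' {0} ∩ C) ≤ ‖x - x₀‖ := by
      simpa [dist_eq_norm] using infDist_le_dist_of_mem hx₀S
    have hxx' : ‖x - x'‖ < a * ‖g x‖ + η' := by
      rw [← dist_eq_norm]; exact hx'd.trans_le (add_le_add_left hcal _)
    have hx'x₀ : ‖x' - x₀‖ ≤ 3 * δ := by
      have h1 : ‖x' - x₀‖ ≤ ‖x' - x‖ + ‖x - x₀‖ := norm_sub_le_norm_sub_add_norm_sub _ _ _
      have h2 : ‖x' - x‖ = ‖x - x'‖ := norm_sub_rev _ _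
      have h3 : ‖x - x'‖ < δ + η' := by
        rw [← dist_eq_norm]
        exact hx'd.trans_le (add_le_add (hinf2.trans hxδ) le_rfl)
      have h4 : η' ≤ δ := min_le_left _ _
      linarith
    have hfmin : f x₀ ≤ f x' := hmin x' hx'S.2 hx'S.1 (by linarith)
    have hxball : x ∈ closedBall x₀ rf :=
      mem_closedBall_iff_norm.mpr (by linarith)
    have hx'ball : x' ∈ closedBall x₀ rf :=
      mem_closedBall_iff_norm.mpr (by linarith)
    have hlip := hfL x' hx'ball x hxball
    have h5 : f x' - f x ≤ Kf * ‖x' - x‖ := (le_abs_self _).trans hlip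
    have h6 : ‖x' - x‖ = ‖x - x'‖ := norm_sub_rev _ _
    have h7 : Kf * ‖x - x'‖ ≤ Kf * (a * ‖g x‖ + η') :=
      mul_le_mul_of_nonneg_left hxx'.le hKf.le
    have h8 : Kf * η' ≤ η := by
      have : η' ≤ η / Kf := min_le_right _ _
      calc Kf * η' ≤ Kf * (η / Kf) := mul_le_mul_of_nonneg_left this hKf.le
        _ = η := by field_simp
    nlinarith
  -- Step A: key inequality on the contingent cone
  have key : ∀ h ∈ contingentCone C x₀, 0 ≤ Df h + c * ‖Dg h‖ := by
    intro h hK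
    set M := 1 + c + Kf + c * Kg with hMdef
    have hM : 0 < M := by positivity
    refine le_of_forall_pos_le_add (fun η hη => ?_)
    set ε := min 1 (η / M) with hεdef
    have hεpos : 0 < ε := lt_min one_pos (div_pos hη hM)
    have hε1 : ε ≤ 1 := min_le_left _ _
    have hεM : ε * M ≤ η := by
      have : ε ≤ η / M := min_le_right _ _
      calc ε * M ≤ (η / M) * M := mul_le_mul_of_nonneg_right this hM.le
        _ = η := by field_simp
    set m := min δ (min rf rg) with hmdef
    have hm : 0 < m := lt_min hδ (lt_min hrf hrg)
    have Epos : ∀ᶠ τ : ℝ in 𝓝[>] 0, 0 < τ := eventually_mem_nhdsWithin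
    have E1 : ∀ᶠ τ : ℝ in 𝓝[>] 0,
        |τ⁻¹ * (f (x₀ + τ • h) - f x₀) - Df h| < ε := by
      have := hDf h
      filter_upwards [this (Metric.ball_mem_nhds (Df h) hεpos)] with τ hτ
      simpa [Real.dist_eq, smul_eq_mul] using hτ
    have E2 : ∀ᶠ τ : ℝ in 𝓝[>] 0,
        ‖τ⁻¹ • (g (x₀ + τ • h) - g x₀) - Dg h‖ < ε := by
      filter_upwards [(hDg h) (Metric.ball_mem_nhds (Dg h) hεpos)] with τ hτ
      simpa [dist_eq_norm] using hτ
    have E3 : ∀ᶠ τ : ℝ in 𝓝[>] 0, τ * (‖h‖ + 2) < m := by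
      have ht : Tendsto (fun τ : ℝ => τ * (‖h‖ + 2)) (𝓝[>] 0) (𝓝 0) := by
        have := (tendsto_id.mono_left nhdsWithin_le_nhds :
          Tendsto (id : ℝ → ℝ) (𝓝[>] (0:ℝ)) (𝓝 0)).mul_const (‖h‖ + 2)
        simpa using this
      exact ht.eventually_lt_const hm
    have Fcb : IsCoboundedUnder (· ≥ ·) (𝓝[>] (0:ℝ))
        (fun τ : ℝ => infDist (x₀ + τ • h) C / τ) := by
      refine isCoboundedUnder_ge_of_eventually_le _ (x := ‖h‖) ?_
      filter_upwards [Epos] with τ hτ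
      have h1 : infDist (x₀ + τ • h) C ≤ τ * ‖h‖ := by
        have := infDist_le_dist_of_mem (x := x₀ + τ • h) hx₀C
        calc infDist (x₀ + τ • h) C ≤ dist (x₀ + τ • h) x₀ := this
          _ = ‖τ • h‖ := by rw [dist_eq_norm]; congr 1; abel
          _ = τ * ‖h‖ := by rw [norm_smul, Real.norm_eq_abs, abs_of_pos hτ]
      rw [div_le_iff₀ hτ]
      linarith [h1]
    have F : ∃ᶠ τ : ℝ in 𝓝[>] 0, infDist (x₀ + τ • h) C / τ < ε := by
      apply frequently_lt_of_liminf_lt Fcb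
      have : lowerDini C x₀ h = 0 := hK
      rw [lowerDini] at this
      rw [this]
      exact hεpos
    obtain ⟨τ, hF, hτpos, hE1, hE2, hE3⟩ :=
      (F.and_eventually (Epos.and (E1.and (E2.and E3)))).exists
    have hFd : infDist (x₀ + τ • h) C < ε * τ := by
      rw [div_lt_iff₀ hτpos] at hF; linarith
    obtain ⟨z, hzC, hzd⟩ := (infDist_lt_iff hCne).mp hFd
    set u := x₀ + τ • h with hudef
    have he : ‖z - u‖ < ε * τ := by
      rw [← dist_eq_norm, dist_comm]; exact hzd
    have hu0 : ‖u - x₀‖ = τ * ‖h‖ := by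
      rw [hudef]
      have : x₀ + τ • h - x₀ = τ • h := by abel
      rw [this, norm_smul, Real.norm_eq_abs, abs_of_pos hτpos]
    have hum : ‖u - x₀‖ ≤ m := by
      rw [hu0]; nlinarith
    have hz0 : ‖z - x₀‖ ≤ m := by
      have h1 : ‖z - x₀‖ ≤ ‖z - u‖ + ‖u - x₀‖ := norm_sub_le_norm_sub_add_norm_sub _ _ _
      have h2 : ε * τ ≤ τ := by nlinarith
      rw [hu0] at h1
      have h4 : τ * (‖h‖+1) ≤ τ * (‖h‖+2) :=
        mul_le_mul_of_nonneg_left (by linarith) hτpos.le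
      have h5 : τ * (‖h‖+1) = τ * ‖h‖ + τ := by ring
      linarith [he]
    have hmδ : m ≤ δ := min_le_left _ _
    have hmrf : m ≤ rf := (min_le_right _ _).trans (min_le_left _ _)
    have hmrg : m ≤ rg := (min_le_right _ _).trans (min_le_right _ _)
    -- penalty at z
    have P : f x₀ ≤ f z + c * ‖g z‖ := hpen z hzC (hz0.trans hmδ)
    -- Lipschitz comparisons
    have hzrf : z ∈ closedBall x₀ rf := mem_closedBall_iff_norm.mpr (hz0.trans hmrf)
    have hurf : u ∈ closedBall x₀ rf := mem_closedBall_iff_norm.mpr (hum.trans hmrf)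
    have hzrg : z ∈ closedBall x₀ rg := mem_closedBall_iff_norm.mpr (hz0.trans hmrg)
    have hurg : u ∈ closedBall x₀ rg := mem_closedBall_iff_norm.mpr (hum.trans hmrg)
    have hLf : f z - f u ≤ Kf * ‖z - u‖ := (le_abs_self _).trans (hfL z hzrf u hurf)
    have hLg : ‖g z‖ ≤ ‖g u‖ + Kg * ‖z - u‖ := by
      have := hgL z hzrg u hurg
      have h2 : ‖g z‖ - ‖g u‖ ≤ ‖g z - g u‖ := norm_sub_norm_le _ _
      linarith
    -- difference quotient bounds
    have hDfq : f u - f x₀ ≤ τ * (Df h + ε) := by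
      have h1 : τ⁻¹ * (f u - f x₀) - Df h < ε := (le_abs_self _).trans_lt hE1
      have h2 : τ⁻¹ * (f u - f x₀) < Df h + ε := by linarith
      calc f u - f x₀ = τ * (τ⁻¹ * (f u - f x₀)) := by
            rw [← mul_assoc, mul_inv_cancel₀ hτpos.ne', one_mul]
        _ ≤ τ * (Df h + ε) := mul_le_mul_of_nonneg_left h2.le hτpos.le
    have hDgq : ‖g u‖ ≤ τ * (‖Dg h‖ + ε) := by
      have h1 : ‖τ⁻¹ • (g u - g x₀)‖ - ‖Dg h‖ ≤ ‖τ⁻¹ • (g u - g x₀) - Dg h‖ :=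
        norm_sub_norm_le _ _
      have h2 : ‖τ⁻¹ • (g u - g x₀)‖ = τ⁻¹ * ‖g u‖ := by
        rw [hgx₀, sub_zero, norm_smul, Real.norm_eq_abs, abs_of_pos (inv_pos.mpr hτpos)]
      have h3 : τ⁻¹ * ‖g u‖ ≤ ‖Dg h‖ + ε := by
        have := hE2; rw [h2] at h1; linarith
      calc ‖g u‖ = τ * (τ⁻¹ * ‖g u‖) := by
            rw [← mul_assoc, mul_inv_cancel₀ hτpos.ne', one_mul]
        _ ≤ τ * (‖Dg h‖ + ε) := mul_le_mul_of_nonneg_left h3 hτpos.le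
    -- combine
    have he' : ‖z - u‖ ≤ ε * τ := he.le
    have hεnn : (0:ℝ) ≤ ε := hεpos.le
    have step : 0 ≤ τ * (Df h + c * ‖Dg h‖ + ε * M) := by
      have hc' : 0 ≤ c := hc.le
      nlinarith [mul_le_mul_of_nonneg_left hDgq hc', mul_le_mul_of_nonneg_left he' hc.le,
        mul_le_mul_of_nonneg_left he' hKf.le, norm_nonneg (g u), norm_nonneg (z - u),
        mul_le_mul_of_nonneg_left (mul_le_mul_of_nonneg_left he' hKg.le) hc']
    have := (mul_nonneg_iff_of_pos_left hτpos).mp step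
    linarith
  -- membership of 0 in the cone
  have h0K : (0:X) ∈ contingentCone C x₀ := by
    have : ∀ τ : ℝ, infDist (x₀ + τ • (0:X)) C / τ = 0 := by
      intro τ; rw [smul_zero, add_zero, infDist_zero_of_mem hx₀C, zero_div]
    show lowerDini C x₀ 0 = 0
    rw [lowerDini]
    simp only [this]
    exact liminf_const 0
  -- Step B: sublinear functional and Hahn-Banach
  set K := contingentCone C x₀ with hKdef
  set S : Y → Set ℝ := fun y =>
    {z | ∃ h ∈ K, ∃ t : ℝ, 0 ≤ t ∧ z = t * Df h + c * ‖y - t • Dg h‖} with hSdef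
  set q : Y → ℝ := fun y => sInf (S y) with hqdef
  have hSmem : ∀ y, c * ‖y‖ ∈ S y := by
    intro y
    refine ⟨0, h0K, 0, le_refl 0, ?_⟩
    simp
  have hSlb : ∀ y, ∀ z ∈ S y, -(c * ‖y‖) ≤ z := by
    rintro y z ⟨h, hKh, t, ht, rfl⟩
    have h1 : ‖t • Dg h‖ - ‖y‖ ≤ ‖y - t • Dg h‖ := by
      have := norm_sub_norm_le (t • Dg h) y
      have h2 : ‖t • Dg h - y‖ = ‖y - t • Dg h‖ := norm_sub_rev _ _
      linarith
    have h3 : ‖t • Dg h‖ = t * ‖Dg h‖ := by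
      rw [norm_smul, Real.norm_eq_abs, abs_of_nonneg ht]
    have h4 : 0 ≤ t * (Df h + c * ‖Dg h‖) := mul_nonneg ht (key h hKh)
    have h5 : c * (t * ‖Dg h‖ - ‖y‖) ≤ c * ‖y - t • Dg h‖ :=
      mul_le_mul_of_nonneg_left (by rw [← h3]; exact h1) hc.le
    nlinarith
  have hbdd : ∀ y, BddBelow (S y) := fun y => ⟨-(c * ‖y‖), fun z hz => hSlb y z hz⟩
  have hqle : ∀ y, ∀ z ∈ S y, q y ≤ z := fun y z hz => csInf_le (hbdd y) hz
  have hqub : ∀ y, q y ≤ c * ‖y‖ := fun y => hqle y _ (hSmem y)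
  have hqlb : ∀ y, -(c * ‖y‖) ≤ q y := fun y => le_csInf ⟨_, hSmem y⟩ (hSlb y)
  have hq_add : ∀ y₁ y₂, q (y₁ + y₂) ≤ q y₁ + q y₂ := by
    intro y₁ y₂
    refine le_of_forall_pos_le_add (fun η hη => ?_)
    obtain ⟨z₁, hz₁S, hz₁⟩ := exists_lt_of_csInf_lt ⟨_, hSmem y₁⟩
      (lt_add_of_pos_right (q y₁) (half_pos hη))
    obtain ⟨z₂, hz₂S, hz₂⟩ := exists_lt_of_csInf_lt ⟨_, hSmem y₂⟩
      (lt_add_of_pos_right (q y₂) (half_pos hη))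
    obtain ⟨h₁, hK₁, t₁, ht₁, rfl⟩ := hz₁S
    obtain ⟨h₂, hK₂, t₂, ht₂, rfl⟩ := hz₂S
    rcases eq_or_lt_of_le (add_nonneg ht₁ ht₂ : (0:ℝ) ≤ t₁ + t₂) with h0 | hpos
    · have ht₁0 : t₁ = 0 := by linarith
      have ht₂0 : t₂ = 0 := by linarith
      subst ht₁0; subst ht₂0
      have h1 : q (y₁ + y₂) ≤ c * ‖y₁ + y₂‖ := hqub _
      have h2 : ‖y₁ + y₂‖ ≤ ‖y₁‖ + ‖y₂‖ := norm_add_le _ _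
      have h3 : c * ‖y₁ + y₂‖ ≤ c * (‖y₁‖ + ‖y₂‖) := mul_le_mul_of_nonneg_left h2 hc.le
      simp only [zero_mul, zero_smul, sub_zero, zero_add] at hz₁ hz₂ ⊢
      linarith
    · set t := t₁ + t₂ with htdef
      set h' := (t₁/t) • h₁ + (t₂/t) • h₂ with hh'def
      have hh'K : h' ∈ K := hconv hK₁ hK₂ (div_nonneg ht₁ hpos.le)
        (div_nonneg ht₂ hpos.le) (by field_simp; exact htdef.symm)
      have hmem : t * Df h' + c * ‖(y₁ + y₂) - t • Dg h'‖ ∈ S (y₁ + y₂) :=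
        ⟨h', hh'K, t, hpos.le, rfl⟩
      have e1 : t * Df h' = t₁ * Df h₁ + t₂ * Df h₂ := by
        rw [hh'def]
        rw [map_add, map_smul, map_smul]
        simp only [smul_eq_mul]
        field_simp
      have e2 : t • Dg h' = t₁ • Dg h₁ + t₂ • Dg h₂ := by
        rw [hh'def, map_add, map_smul, map_smul, smul_add, smul_smul, smul_smul,
          mul_div_cancel₀ _ hpos.ne', mul_div_cancel₀ _ hpos.ne']
      have e3 : ‖(y₁ + y₂) - t • Dg h'‖ ≤ ‖y₁ - t₁ • Dg h₁‖ + ‖y₂ - t₂ • Dg h₂‖ := by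
        rw [e2]
        have : (y₁ + y₂) - (t₁ • Dg h₁ + t₂ • Dg h₂)
            = (y₁ - t₁ • Dg h₁) + (y₂ - t₂ • Dg h₂) := by abel
        rw [this]
        exact norm_add_le _ _
      have h4 := hqle _ _ hmem
      have h5 : c * ‖(y₁ + y₂) - t • Dg h'‖
          ≤ c * ‖y₁ - t₁ • Dg h₁‖ + c * ‖y₂ - t₂ • Dg h₂‖ := by
        have := mul_le_mul_of_nonneg_left e3 hc.le
        linarith [this]
      rw [e1] at h4
      linarith
  have hq_smul_le : ∀ b : ℝ, 0 < b → ∀ y, q (b • y) ≤ b * q y := by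
    intro b hb y
    refine le_of_forall_pos_le_add (fun η hη => ?_)
    obtain ⟨z, hzS, hz⟩ := exists_lt_of_csInf_lt ⟨_, hSmem y⟩
      (lt_add_of_pos_right (q y) (div_pos hη hb))
    obtain ⟨h, hKh, t, ht, rfl⟩ := hzS
    have hmem : (b*t) * Df h + c * ‖b • y - (b*t) • Dg h‖ ∈ S (b • y) :=
      ⟨h, hKh, b*t, mul_nonneg hb.le ht, rfl⟩
    have hnorm : ‖b • y - (b*t) • Dg h‖ = b * ‖y - t • Dg h‖ := by
      rw [mul_smul, ← smul_sub, norm_smul, Real.norm_eq_abs, abs_of_pos hb]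
    have h2 := hqle _ _ hmem
    rw [hnorm] at h2
    calc q (b • y) ≤ b * t * Df h + c * (b * ‖y - t • Dg h‖) := h2
      _ = b * (t * Df h + c * ‖y - t • Dg h‖) := by ring
      _ ≤ b * (q y + η / b) := mul_le_mul_of_nonneg_left hz.le hb.le
      _ = b * q y + η := by field_simp [mul_comm]
  have hq_smul : ∀ b : ℝ, 0 < b → ∀ y, q (b • y) = b * q y := by
    intro b hb y
    refine le_antisymm (hq_smul_le b hb y) ?_
    have h1 := hq_smul_le b⁻¹ (inv_pos.mpr hb) (b • y)
    rw [inv_smul_smul₀ hb.ne' y] at h1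
    calc b * q y ≤ b * (b⁻¹ * q (b • y)) := mul_le_mul_of_nonneg_left h1 hb.le
      _ = q (b • y) := by field_simp
  have hf0 : ∀ x : ((⊥ : Y →ₗ.[ℝ] ℝ)).domain, (⊥ : Y →ₗ.[ℝ] ℝ) x ≤ q ↑x := by
    intro x
    have hx0 : (x : Y) = 0 := (Submodule.mem_bot ℝ).1 x.2
    show (0:ℝ) ≤ q ↑x
    rw [hx0]
    simpa using hqlb (0:Y)
  obtain ⟨L, -, hLle⟩ := exists_extension_of_le_sublinear (⊥ : Y →ₗ.[ℝ] ℝ) q hq_smul hq_add hf0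
  have hLbound : ∀ y, ‖L y‖ ≤ c * ‖y‖ := by
    intro y
    rw [Real.norm_eq_abs, abs_le]
    constructor
    · have h1 := (hLle (-y)).trans (hqub (-y))
      rw [map_neg, norm_neg] at h1
      linarith
    · exact (hLle y).trans (hqub y)
  set ℓ : Y →L[ℝ] ℝ := L.mkContinuous c hLbound with hℓdef
  have hℓnorm : ‖ℓ‖ ≤ c := LinearMap.mkContinuous_norm_le L hc.le hLbound
  have hℓapp : ∀ y, ℓ y = L y := fun y => rfl
  refine ⟨-ℓ, -(Df + (-ℓ).comp Dg), ?_, ?_, ?_⟩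
  · rw [norm_neg]; exact hℓnorm
  · intro h hKh
    have h1 : q (Dg h) ≤ Df h := by
      have := hqle (Dg h) _ ⟨h, hKh, 1, zero_le_one, rfl⟩
      simpa using this
    have h2 : L (Dg h) ≤ Df h := (hLle (Dg h)).trans h1
    simp only [ContinuousLinearMap.neg_apply, ContinuousLinearMap.add_apply,
      ContinuousLinearMap.comp_apply, hℓapp]
    linarith
  · exact add_neg_cancel _
end
end

section
/- Let X and Y be real Banach spaces, let A ⊆ X and B ⊆ Y be closed sets, let x₀ ∈ A and y₀ ∈ B, and endow X × Y with the product norm ‖(x, y)‖ = ‖x‖_X + ‖y‖_Y. Then K(A × B, (x₀, y₀)) ⊆ K(A, x₀) × K(B, y₀). Moreover, if A is tangentially regular at x₀ or B is tangentially regular at y₀, then K(A × B, (x₀, y₀)) = K(A, x₀) × K(B, y₀). -/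
open Filter Metric Topology Set

noncomputable section

/-- The adjacent (Ursescu) tangent cone to `A` at `x`. -/
def adjacentCone {X : Type*} [NormedAddCommGroup X] [NormedSpace ℝ X]
    (A : Set X) (x : X) : Set X :=
  {h | Tendsto (fun τ : ℝ => infDist (x + τ • h) A / τ) (𝓝[>] (0:ℝ)) (𝓝 0)}

/-- `A` is tangentially regular at `x` if the contingent and adjacent cones coincide. -/
def TangentiallyRegular {X : Type*} [NormedAddCommGroup X] [NormedSpace ℝ X]
    (A : Set X) (x : X) : Prop :=
  contingentCone A x = adjacentCone A x

/-- `X × Y` equipped with the sum norm `‖(x, y)‖ = ‖x‖ + ‖y‖`. -/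
abbrev toProd1 {X Y : Type*} : X × Y ≃ WithLp 1 (X × Y) := (WithLp.equiv 1 (X × Y)).symm

/-- dist in the ℓ¹ product. -/
lemma dist_toProd1 {X Y : Type*} [NormedAddCommGroup X] [NormedAddCommGroup Y]
    (p q : X × Y) : dist (toProd1 p) (toProd1 q) = dist p.1 q.1 + dist p.2 q.2 := by
  have := WithLp.prod_dist_eq_add (p := 1) (α := X) (β := Y) (by norm_num) (toProd1 p) (toProd1 q)
  simpa using this

/-- infDist to a product set in the ℓ¹ product. -/
lemma infDist_toProd1 {X Y : Type*} [NormedAddCommGroup X] [NormedAddCommGroup Y]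
    {A : Set X} {B : Set Y} (hA : A.Nonempty) (hB : B.Nonempty) (x : X) (y : Y) :
    infDist (toProd1 (x, y)) (toProd1 '' (A ×ˢ B)) = infDist x A + infDist y B := by
  have hne : (toProd1 '' (A ×ˢ B)).Nonempty := by
    obtain ⟨a, ha⟩ := hA; obtain ⟨b, hb⟩ := hB
    exact ⟨toProd1 (a, b), ⟨(a, b), ⟨ha, hb⟩, rfl⟩⟩
  apply le_antisymm
  · apply le_of_forall_pos_le_add
    intro ε hε
    obtain ⟨a, ha, hda⟩ := (infDist_lt_iff hA).mp
      (show infDist x A < infDist x A + ε / 2 by linarith)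
    obtain ⟨b, hb, hdb⟩ := (infDist_lt_iff hB).mp
      (show infDist y B < infDist y B + ε / 2 by linarith)
    calc infDist (toProd1 (x, y)) (toProd1 '' (A ×ˢ B))
        ≤ dist (toProd1 (x, y)) (toProd1 (a, b)) :=
          infDist_le_dist_of_mem ⟨(a, b), ⟨ha, hb⟩, rfl⟩
      _ = dist x a + dist y b := dist_toProd1 _ _
      _ ≤ infDist x A + infDist y B + ε := by linarith
  · by_contra hlt
    push_neg at hlt
    obtain ⟨p, hp, hdp⟩ := (infDist_lt_iff hne).mp hlt
    obtain ⟨⟨a, b⟩, ⟨ha, hb⟩, rfl⟩ := hp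
    rw [dist_toProd1] at hdp
    have h1 : infDist x A ≤ dist x a := infDist_le_dist_of_mem ha
    have h2 : infDist y B ≤ dist y b := infDist_le_dist_of_mem hb
    linarith

/-- Nonnegativity and boundedness of the quotient on `(0, ∞)`. -/
lemma quot_bounds {X : Type*} [NormedAddCommGroup X] [NormedSpace ℝ X]
    {A : Set X} {x : X} (hx : x ∈ A) (h : X) :
    ∀ τ ∈ Ioi (0:ℝ), 0 ≤ infDist (x + τ • h) A / τ ∧ infDist (x + τ • h) A / τ ≤ ‖h‖ := by
  intro τ hτ
  have hτ' : (0:ℝ) < τ := hτ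
  constructor
  · exact div_nonneg infDist_nonneg hτ'.le
  · rw [div_le_iff₀ hτ']
    calc infDist (x + τ • h) A ≤ dist (x + τ • h) x := infDist_le_dist_of_mem hx
      _ = ‖τ • h‖ := by rw [dist_eq_norm, add_sub_cancel_left]
      _ = τ * ‖h‖ := by rw [norm_smul, Real.norm_eq_abs, abs_of_pos hτ']
      _ = ‖h‖ * τ := mul_comm _ _

lemma liminf_eq_zero_of_freq {u : ℝ → ℝ}
    (h0 : ∀ᶠ τ in 𝓝[>] (0:ℝ), 0 ≤ u τ) {C : ℝ} (hC : ∀ᶠ τ in 𝓝[>] (0:ℝ), u τ ≤ C)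
    (hfreq : ∀ ε > (0:ℝ), ∃ᶠ τ in 𝓝[>] (0:ℝ), u τ < ε) :
    liminf u (𝓝[>] (0:ℝ)) = 0 := by
  have hbdd : IsBoundedUnder (· ≥ ·) (𝓝[>] (0:ℝ)) u := ⟨0, h0⟩
  have hcob : IsCoboundedUnder (· ≥ ·) (𝓝[>] (0:ℝ)) u :=
    IsBoundedUnder.isCoboundedUnder_ge ⟨C, hC⟩
  apply le_antisymm
  · apply le_of_forall_pos_le_add
    intro ε hε
    have := (hfreq ε hε).mono fun τ hτ => hτ.le
    simpa using liminf_le_of_frequently_le this hbdd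
  · exact le_liminf_of_le hcob h0

lemma freq_of_liminf_eq_zero {u : ℝ → ℝ} {C : ℝ} (hC : ∀ᶠ τ in 𝓝[>] (0:ℝ), u τ ≤ C)
    (hl : liminf u (𝓝[>] (0:ℝ)) = 0) :
    ∀ ε > (0:ℝ), ∃ᶠ τ in 𝓝[>] (0:ℝ), u τ < ε := fun ε hε =>
  frequently_lt_of_liminf_lt (IsBoundedUnder.isCoboundedUnder_ge ⟨C, hC⟩) (hl.le.trans_lt hε)

theorem stmt3 {X Y : Type*} [NormedAddCommGroup X] [NormedSpace ℝ X] [CompleteSpace X]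
    [NormedAddCommGroup Y] [NormedSpace ℝ Y] [CompleteSpace Y]
    (A : Set X) (B : Set Y) (hA : IsClosed A) (hB : IsClosed B)
    (x₀ : X) (y₀ : Y) (hx₀ : x₀ ∈ A) (hy₀ : y₀ ∈ B) :
    contingentCone (toProd1 '' (A ×ˢ B)) (toProd1 (x₀, y₀))
      ⊆ toProd1 '' (contingentCone A x₀ ×ˢ contingentCone B y₀)
    ∧ ((TangentiallyRegular A x₀ ∨ TangentiallyRegular B y₀) →
        contingentCone (toProd1 '' (A ×ˢ B)) (toProd1 (x₀, y₀))
          = toProd1 '' (contingentCone A x₀ ×ˢ contingentCone B y₀)) := by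
  have hAne : A.Nonempty := ⟨x₀, hx₀⟩
  have hBne : B.Nonempty := ⟨y₀, hy₀⟩
  -- key pointwise identity
  have key : ∀ (h₁ : X) (h₂ : Y) (τ : ℝ),
      infDist (toProd1 (x₀, y₀) + τ • toProd1 (h₁, h₂)) (toProd1 '' (A ×ˢ B)) / τ
        = infDist (x₀ + τ • h₁) A / τ + infDist (y₀ + τ • h₂) B / τ := by
    intro h₁ h₂ τ
    rw [show (toProd1 (x₀, y₀) + τ • toProd1 (h₁, h₂) : WithLp 1 (X × Y))
        = toProd1 (x₀ + τ • h₁, y₀ + τ • h₂) from rfl,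
      infDist_toProd1 hAne hBne, add_div]
  have hprodmem : (toProd1 (x₀, y₀) : WithLp 1 (X × Y)) ∈ toProd1 '' (A ×ˢ B) :=
    ⟨(x₀, y₀), ⟨hx₀, hy₀⟩, rfl⟩
  -- forward inclusion
  have fwd : contingentCone (toProd1 '' (A ×ˢ B)) (toProd1 (x₀, y₀))
      ⊆ toProd1 '' (contingentCone A x₀ ×ˢ contingentCone B y₀) := by
    intro h' hh'
    obtain ⟨⟨h₁, h₂⟩, rfl⟩ : ∃ p, h' = toProd1 p := ⟨toProd1.symm h', (toProd1.apply_symm_apply h').symm⟩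
    have hh'' : liminf (fun τ : ℝ =>
        infDist (x₀ + τ • h₁) A / τ + infDist (y₀ + τ • h₂) B / τ) (𝓝[>] (0:ℝ)) = 0 := by
      have := hh'
      simp only [contingentCone, lowerDini, mem_setOf_eq] at this
      rwa [show (fun τ : ℝ =>
          infDist (toProd1 (x₀, y₀) + τ • toProd1 (h₁, h₂)) (toProd1 '' (A ×ˢ B)) / τ)
          = fun τ => infDist (x₀ + τ • h₁) A / τ + infDist (y₀ + τ • h₂) B / τ
        from funext (key h₁ h₂)] at this
    set gA : ℝ → ℝ := fun τ => infDist (x₀ + τ • h₁) A / τ with hgA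
    set gB : ℝ → ℝ := fun τ => infDist (y₀ + τ • h₂) B / τ with hgB
    have hevA := eventually_mem_nhdsWithin (a := (0:ℝ)) (s := Ioi 0)
    have h0A : ∀ᶠ τ in 𝓝[>] (0:ℝ), 0 ≤ gA τ := hevA.mono fun τ hτ => (quot_bounds hx₀ h₁ τ hτ).1
    have h0B : ∀ᶠ τ in 𝓝[>] (0:ℝ), 0 ≤ gB τ := hevA.mono fun τ hτ => (quot_bounds hy₀ h₂ τ hτ).1
    have hCA : ∀ᶠ τ in 𝓝[>] (0:ℝ), gA τ ≤ ‖h₁‖ := hevA.mono fun τ hτ => (quot_bounds hx₀ h₁ τ hτ).2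
    have hCB : ∀ᶠ τ in 𝓝[>] (0:ℝ), gB τ ≤ ‖h₂‖ := hevA.mono fun τ hτ => (quot_bounds hy₀ h₂ τ hτ).2
    have hCsum : ∀ᶠ τ in 𝓝[>] (0:ℝ), gA τ + gB τ ≤ ‖h₁‖ + ‖h₂‖ :=
      hCA.and hCB |>.mono fun τ ⟨h1, h2⟩ => by linarith
    have hfreq : ∀ ε > (0:ℝ), ∃ᶠ τ in 𝓝[>] (0:ℝ), gA τ + gB τ < ε :=
      freq_of_liminf_eq_zero hCsum hh''
    have memA : h₁ ∈ contingentCone A x₀ := by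
      apply liminf_eq_zero_of_freq h0A hCA
      intro ε hε
      exact ((hfreq ε hε).and_eventually h0B).mono fun τ ⟨hlt, h0⟩ => by linarith
    have memB : h₂ ∈ contingentCone B y₀ := by
      apply liminf_eq_zero_of_freq h0B hCB
      intro ε hε
      exact ((hfreq ε hε).and_eventually h0A).mono fun τ ⟨hlt, h0⟩ => by linarith
    exact ⟨(h₁, h₂), ⟨memA, memB⟩, rfl⟩
  refine ⟨fwd, fun hreg => le_antisymm fwd ?_⟩
  rintro _ ⟨⟨h₁, h₂⟩, ⟨memA, memB⟩, rfl⟩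
  show liminf (fun τ : ℝ =>
      infDist (toProd1 (x₀, y₀) + τ • toProd1 (h₁, h₂)) (toProd1 '' (A ×ˢ B)) / τ) (𝓝[>] (0:ℝ)) = 0
  have hrw : (fun τ : ℝ =>
      infDist (toProd1 (x₀, y₀) + τ • toProd1 (h₁, h₂)) (toProd1 '' (A ×ˢ B)) / τ)
      = fun τ => infDist (x₀ + τ • h₁) A / τ + infDist (y₀ + τ • h₂) B / τ := funext (key h₁ h₂)
  rw [hrw]
  set gA : ℝ → ℝ := fun τ => infDist (x₀ + τ • h₁) A / τ with hgA
  set gB : ℝ → ℝ := fun τ => infDist (y₀ + τ • h₂) B / τ with hgB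
  have hevA := eventually_mem_nhdsWithin (a := (0:ℝ)) (s := Ioi 0)
  have h0A : ∀ᶠ τ in 𝓝[>] (0:ℝ), 0 ≤ gA τ := hevA.mono fun τ hτ => (quot_bounds hx₀ h₁ τ hτ).1
  have h0B : ∀ᶠ τ in 𝓝[>] (0:ℝ), 0 ≤ gB τ := hevA.mono fun τ hτ => (quot_bounds hy₀ h₂ τ hτ).1
  have hCA : ∀ᶠ τ in 𝓝[>] (0:ℝ), gA τ ≤ ‖h₁‖ := hevA.mono fun τ hτ => (quot_bounds hx₀ h₁ τ hτ).2
  have hCB : ∀ᶠ τ in 𝓝[>] (0:ℝ), gB τ ≤ ‖h₂‖ := hevA.mono fun τ hτ => (quot_bounds hy₀ h₂ τ hτ).2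
  have h0sum : ∀ᶠ τ in 𝓝[>] (0:ℝ), 0 ≤ gA τ + gB τ :=
    h0A.and h0B |>.mono fun τ ⟨h1, h2⟩ => by linarith
  have hCsum : ∀ᶠ τ in 𝓝[>] (0:ℝ), gA τ + gB τ ≤ ‖h₁‖ + ‖h₂‖ :=
    hCA.and hCB |>.mono fun τ ⟨h1, h2⟩ => by linarith
  apply liminf_eq_zero_of_freq h0sum hCsum
  intro ε hε
  rcases hreg with hregA | hregB
  · -- A regular: gA → 0, liminf gB = 0
    have htend : Tendsto gA (𝓝[>] (0:ℝ)) (𝓝 0) := by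
      have : h₁ ∈ adjacentCone A x₀ := hregA ▸ memA
      exact this
    have hev : ∀ᶠ τ in 𝓝[>] (0:ℝ), gA τ < ε / 2 := by
      have := htend.eventually (eventually_lt_nhds (show (0:ℝ) < ε / 2 by linarith))
      simpa using this
    have hfr : ∃ᶠ τ in 𝓝[>] (0:ℝ), gB τ < ε / 2 :=
      freq_of_liminf_eq_zero hCB memB (ε / 2) (by linarith)
    exact (hfr.and_eventually hev).mono fun τ ⟨h1, h2⟩ => by linarith
  · have htend : Tendsto gB (𝓝[>] (0:ℝ)) (𝓝 0) := by
      have : h₂ ∈ adjacentCone B y₀ := hregB ▸ memB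
      exact this
    have hev : ∀ᶠ τ in 𝓝[>] (0:ℝ), gB τ < ε / 2 := by
      have := htend.eventually (eventually_lt_nhds (show (0:ℝ) < ε / 2 by linarith))
      simpa using this
    have hfr : ∃ᶠ τ in 𝓝[>] (0:ℝ), gA τ < ε / 2 :=
      freq_of_liminf_eq_zero hCA memA (ε / 2) (by linarith)
    exact (hfr.and_eventually hev).mono fun τ ⟨h1, h2⟩ => by linarith
end
end

section
/- Let X and Y be real Banach spaces, let A ⊆ X and B ⊆ Y be closed sets, let x₀ ∈ A and y₀ ∈ B, and endow X × Y with the product norm ‖(x, y)‖ = ‖x‖_X + ‖y‖_Y. If A is tangentially regular at x₀ or B is tangentially regular at y₀, then for all h ∈ X and k ∈ Y: d⁻_{A×B}((x₀, y₀); (h, k)) ≤ dist(h, K(A, x₀)) + dist(k, K(B, y₀)). -/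
open Filter Metric Topology Set

noncomputable section

section Aux
variable {X : Type*} [NormedAddCommGroup X] [NormedSpace ℝ X]

lemma dini_nonneg (A : Set X) (x h : X) :
    ∀ᶠ τ in 𝓝[>] (0:ℝ), 0 ≤ infDist (x + τ • h) A / τ :=
  eventually_mem_nhdsWithin.mono fun _ hτ =>
    div_nonneg infDist_nonneg (le_of_lt hτ)

lemma dini_le_norm {A : Set X} {x : X} (hx : x ∈ A) (h : X) :
    ∀ᶠ τ in 𝓝[>] (0:ℝ), infDist (x + τ • h) A / τ ≤ ‖h‖ := by
  refine eventually_mem_nhdsWithin.mono fun τ hτ => ?_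
  have hτ' : (0:ℝ) < τ := hτ
  have h1 : infDist (x + τ • h) A ≤ τ * ‖h‖ := by
    have := infDist_le_dist_of_mem (x := x + τ • h) hx
    simpa [dist_eq_norm, norm_smul, abs_of_pos hτ'] using this
  rw [div_le_iff₀ hτ']
  linarith [h1]

lemma dini_bddBelow (A : Set X) (x h : X) :
    IsBoundedUnder (· ≥ ·) (𝓝[>] (0:ℝ)) (fun τ => infDist (x + τ • h) A / τ) :=
  ⟨0, (dini_nonneg A x h).mono fun _ h => h⟩

lemma dini_bddAbove {A : Set X} {x : X} (hx : x ∈ A) (h : X) :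
    IsBoundedUnder (· ≤ ·) (𝓝[>] (0:ℝ)) (fun τ => infDist (x + τ • h) A / τ) :=
  ⟨‖h‖, dini_le_norm hx h⟩

/-- Lipschitz property of lowerDini in the direction. -/
lemma lowerDini_le_add {A : Set X} {x : X} (hx : x ∈ A) (h h' : X) :
    lowerDini A x h ≤ lowerDini A x h' + ‖h - h'‖ := by
  have key : ∀ᶠ τ in 𝓝[>] (0:ℝ),
      infDist (x + τ • h) A / τ ≤ infDist (x + τ • h') A / τ + ‖h - h'‖ := by
    refine eventually_mem_nhdsWithin.mono fun τ hτ => ?_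
    have hτ' : (0:ℝ) < τ := hτ
    have h1 : infDist (x + τ • h) A ≤ infDist (x + τ • h') A + τ * ‖h - h'‖ := by
      have := infDist_le_infDist_add_dist (x := x + τ • h) (y := x + τ • h') (s := A)
      have hd : dist (x + τ • h) (x + τ • h') = τ * ‖h - h'‖ := by
        simp [dist_eq_norm, ← smul_sub, norm_smul, abs_of_pos hτ']
      linarith [this, hd ▸ this]
    rw [div_add' _ _ _ (ne_of_gt hτ'), div_le_div_iff₀ hτ' hτ']
    ring_nf
    nlinarith [h1]
  calc lowerDini A x h
      ≤ liminf (fun τ => infDist (x + τ • h') A / τ + ‖h - h'‖) (𝓝[>] (0:ℝ)) := by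
        refine liminf_le_liminf key (dini_bddBelow A x h) ?_
        · exact IsBoundedUnder.isCoboundedUnder_ge
            ⟨‖h'‖ + ‖h - h'‖, (dini_le_norm hx h').mono fun τ ht => add_le_add ht le_rfl⟩
    _ = lowerDini A x h' + ‖h - h'‖ := by
        exact liminf_add_const (𝓝[>] (0:ℝ)) _ _
          (dini_bddAbove hx h').isCoboundedUnder_ge (dini_bddBelow A x h')

lemma zero_mem_contingentCone {A : Set X} {x : X} (hx : x ∈ A) :
    (0:X) ∈ contingentCone A x := by
  have : (fun τ : ℝ => infDist (x + τ • (0:X)) A / τ) = fun _ => (0:ℝ) := by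
    funext τ
    simp [infDist_zero_of_mem hx]
  simp only [contingentCone, mem_setOf_eq, lowerDini, this, liminf_const]

end Aux

lemma liminf_add_le_zero {f g : ℝ → ℝ}
    (hf0 : ∀ᶠ τ in 𝓝[>] (0:ℝ), 0 ≤ f τ) (hg0 : ∀ᶠ τ in 𝓝[>] (0:ℝ), 0 ≤ g τ)
    (hfc : IsCoboundedUnder (· ≥ ·) (𝓝[>] (0:ℝ)) f)
    (hf : liminf f (𝓝[>] (0:ℝ)) ≤ 0) (hg : Tendsto g (𝓝[>] (0:ℝ)) (𝓝 0)) :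
    liminf (fun τ => f τ + g τ) (𝓝[>] (0:ℝ)) ≤ 0 := by
  refine le_of_forall_pos_le_add fun ε hε => ?_
  rw [zero_add]
  have hfreq : ∃ᶠ τ in 𝓝[>] (0:ℝ), f τ < ε / 2 :=
    frequently_lt_of_liminf_lt hfc (by linarith)
  have hev : ∀ᶠ τ in 𝓝[>] (0:ℝ), g τ < ε / 2 :=
    hg.eventually (Filter.Tendsto.eventually_lt_const (by linarith) tendsto_id)
  refine liminf_le_of_frequently_le ?_ ?_
  · exact (hfreq.and_eventually hev).mono fun τ ⟨h1, h2⟩ => by linarith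
  · exact ⟨0, (hf0.and hg0).mono fun τ ⟨h1, h2⟩ => add_nonneg h1 h2⟩

lemma infDist_prod1 {X Y : Type*} [NormedAddCommGroup X] [NormedAddCommGroup Y]
    {A : Set X} {B : Set Y} (hA : A.Nonempty) (hB : B.Nonempty) (x : X) (y : Y) :
    infDist ((WithLp.equiv 1 (X × Y)).symm (x, y))
      ((WithLp.equiv 1 (X × Y)).symm '' (A ×ˢ B)) = infDist x A + infDist y B := by
  have hS : (((WithLp.equiv 1 (X × Y)).symm) '' (A ×ˢ B)).Nonempty :=
    (hA.prod hB).image _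
  have hdist : ∀ (a : X) (b : Y),
      dist ((WithLp.equiv 1 (X × Y)).symm (x, y)) ((WithLp.equiv 1 (X × Y)).symm (a, b))
        = dist x a + dist y b := by
    intro a b
    rw [WithLp.prod_dist_eq_add (by norm_num)]
    norm_num
  apply le_antisymm
  · refine le_of_forall_pos_le_add fun ε hε => ?_
    obtain ⟨a, ha, hda⟩ := (infDist_lt_iff hA).1
      (show infDist x A < infDist x A + ε / 2 by linarith)
    obtain ⟨b, hb, hdb⟩ := (infDist_lt_iff hB).1
      (show infDist y B < infDist y B + ε / 2 by linarith)
    have hmem : (WithLp.equiv 1 (X × Y)).symm (a, b)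
        ∈ (WithLp.equiv 1 (X × Y)).symm '' (A ×ˢ B) := ⟨(a, b), ⟨ha, hb⟩, rfl⟩
    calc infDist ((WithLp.equiv 1 (X × Y)).symm (x, y)) _
        ≤ dist ((WithLp.equiv 1 (X × Y)).symm (x, y)) ((WithLp.equiv 1 (X × Y)).symm (a, b)) :=
          infDist_le_dist_of_mem hmem
      _ = dist x a + dist y b := hdist a b
      _ ≤ infDist x A + infDist y B + ε := by linarith
  · by_contra hcon
    push_neg at hcon
    obtain ⟨w, hw, hdw⟩ := (infDist_lt_iff hS).1 hcon
    obtain ⟨⟨a, b⟩, ⟨ha, hb⟩, rfl⟩ := hw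
    rw [hdist a b] at hdw
    have := infDist_le_dist_of_mem (x := x) ha
    have := infDist_le_dist_of_mem (x := y) hb
    linarith

theorem stmt5 {X Y : Type*} [NormedAddCommGroup X] [NormedSpace ℝ X] [CompleteSpace X]
    [NormedAddCommGroup Y] [NormedSpace ℝ Y] [CompleteSpace Y]
    (A : Set X) (B : Set Y) (hA : IsClosed A) (hB : IsClosed B)
    (x₀ : X) (y₀ : Y) (hx₀ : x₀ ∈ A) (hy₀ : y₀ ∈ B)
    (hreg : TangentiallyRegular A x₀ ∨ TangentiallyRegular B y₀) :
    ∀ (h : X) (k : Y),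
      lowerDini (toProd1 '' (A ×ˢ B)) (toProd1 (x₀, y₀)) (toProd1 (h, k))
        ≤ infDist h (contingentCone A x₀) + infDist k (contingentCone B y₀) := by
  intro h k
  have hAne : A.Nonempty := ⟨x₀, hx₀⟩
  have hBne : B.Nonempty := ⟨y₀, hy₀⟩
  have hKA : (contingentCone A x₀).Nonempty := ⟨0, zero_mem_contingentCone hx₀⟩
  have hKB : (contingentCone B y₀).Nonempty := ⟨0, zero_mem_contingentCone hy₀⟩
  have hz : toProd1 (x₀, y₀) ∈ toProd1 '' (A ×ˢ B) := ⟨(x₀, y₀), ⟨hx₀, hy₀⟩, rfl⟩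
  -- key fact: the lower Dini derivative of the product in a direction (u, v) with
  -- u, v in the contingent cones (one of them adjacent by regularity) is ≤ 0
  have key : ∀ u ∈ contingentCone A x₀, ∀ v ∈ contingentCone B y₀,
      lowerDini (toProd1 '' (A ×ˢ B)) (toProd1 (x₀, y₀)) (toProd1 (u, v)) ≤ 0 := by
    intro u hu v hv
    have hfun : (fun τ : ℝ => infDist (toProd1 (x₀, y₀) + τ • toProd1 (u, v))
        (toProd1 '' (A ×ˢ B)) / τ)
        = fun τ : ℝ => infDist (x₀ + τ • u) A / τ + infDist (y₀ + τ • v) B / τ := by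
      funext τ
      have : toProd1 (x₀, y₀) + τ • toProd1 (u, v) = toProd1 (x₀ + τ • u, y₀ + τ • v) := rfl
      rw [this, infDist_prod1 hAne hBne, add_div]
    rw [lowerDini, hfun]
    rcases hreg with hra | hrb
    · -- A regular: u is adjacent, so the A-part tends to 0
      have hu' : Tendsto (fun τ : ℝ => infDist (x₀ + τ • u) A / τ) (𝓝[>] (0:ℝ)) (𝓝 0) := by
        have := hra ▸ hu; exact this
      have := liminf_add_le_zero (f := fun τ => infDist (y₀ + τ • v) B / τ)
        (g := fun τ => infDist (x₀ + τ • u) A / τ)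
        (dini_nonneg B y₀ v) (dini_nonneg A x₀ u)
        (dini_bddAbove hy₀ v).isCoboundedUnder_ge (le_of_eq hv) hu'
      simpa only [add_comm] using this
    · -- B regular: v is adjacent
      have hv' : Tendsto (fun τ : ℝ => infDist (y₀ + τ • v) B / τ) (𝓝[>] (0:ℝ)) (𝓝 0) := by
        have := hrb ▸ hv; exact this
      exact liminf_add_le_zero (f := fun τ => infDist (x₀ + τ • u) A / τ)
        (g := fun τ => infDist (y₀ + τ • v) B / τ)
        (dini_nonneg A x₀ u) (dini_nonneg B y₀ v)
        (dini_bddAbove hx₀ u).isCoboundedUnder_ge (le_of_eq hu) hv'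
  refine le_of_forall_pos_le_add fun ε hε => ?_
  obtain ⟨u, hu, hdu⟩ := (infDist_lt_iff hKA).1
    (show infDist h (contingentCone A x₀) < infDist h (contingentCone A x₀) + ε / 2 by linarith)
  obtain ⟨v, hv, hdv⟩ := (infDist_lt_iff hKB).1
    (show infDist k (contingentCone B y₀) < infDist k (contingentCone B y₀) + ε / 2 by linarith)
  have hnorm : ‖toProd1 (h, k) - toProd1 (u, v)‖ = ‖h - u‖ + ‖k - v‖ := by
    have : toProd1 (h, k) - toProd1 (u, v) = toProd1 (h - u, k - v) := rfl
    rw [this, WithLp.prod_norm_eq_add (by norm_num)]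
    norm_num
  calc lowerDini (toProd1 '' (A ×ˢ B)) (toProd1 (x₀, y₀)) (toProd1 (h, k))
      ≤ lowerDini (toProd1 '' (A ×ˢ B)) (toProd1 (x₀, y₀)) (toProd1 (u, v))
        + ‖toProd1 (h, k) - toProd1 (u, v)‖ := lowerDini_le_add hz _ _
    _ ≤ 0 + (‖h - u‖ + ‖k - v‖) := by
        rw [hnorm]; exact add_le_add_left (key u hu v hv) _
    _ ≤ infDist h (contingentCone A x₀) + infDist k (contingentCone B y₀) + ε := by
        rw [zero_add]
        rw [dist_eq_norm] at hdu hdv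
        linarith
end
end

section
/- Let X and Y be real Banach spaces, C ⊆ X and D ⊆ Y nonempty closed sets, g : X → Y, x₀ ∈ C with g(x₀) ∈ D, and set y₀ := g(x₀). Assume g is Lipschitz on a neighborhood of x₀. Define g̃ : X × Y → Y by g̃(x, y) := g(x) − y, and endow X × Y with the norm ‖(x, y)‖ = ‖x‖_X + ‖y‖_Y. Then the following are equivalent: (i) there exist a > 0 and s > 0 such that dist(x, g⁻¹(D) ∩ C) ≤ a · dist(g(x), D) for all x ∈ B(x₀, s) ∩ C; (ii) there exist a' > 0 and s' > 0 such that dist((x, y), g̃⁻¹(0) ∩ (C × D)) ≤ a' · ‖g(x) − y‖ for all (x, y) ∈ B((x₀, y₀), s') ∩ (C × D). -/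
open Filter Metric Topology Set

noncomputable section

/-- The map `g̃(x, y) = g(x) − y` on the product space with the sum norm. -/
def gTilde {X Y : Type*} [NormedAddCommGroup X] [NormedAddCommGroup Y]
    (g : X → Y) (p : WithLp 1 (X × Y)) : Y :=
  g ((WithLp.equiv 1 (X × Y)) p).1 - ((WithLp.equiv 1 (X × Y)) p).2

set_option maxHeartbeats 2000000 in
theorem stmt6 {X Y : Type*} [NormedAddCommGroup X] [NormedSpace ℝ X] [CompleteSpace X]
    [NormedAddCommGroup Y] [NormedSpace ℝ Y] [CompleteSpace Y]
    (C : Set X) (D : Set Y) (hCne : C.Nonempty) (hDne : D.Nonempty)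
    (hCcl : IsClosed C) (hDcl : IsClosed D)
    (g : X → Y) (x₀ : X) (hx₀ : x₀ ∈ C) (hgx₀ : g x₀ ∈ D)
    -- g is Lipschitz on a neighborhood of x₀
    (hLip : ∃ K : NNReal, ∃ r > 0, LipschitzOnWith K g (closedBall x₀ r)) :
    -- (i) calmness of the system `g x ∈ D, x ∈ C` at `x₀` is equivalent to
    -- (ii) calmness of the system `g̃(x, y) = 0, (x, y) ∈ C × D` at `(x₀, g x₀)`
    ((∃ a > 0, ∃ s > 0, ∀ x ∈ closedBall x₀ s ∩ C,
        infDist x (g ⁻¹' D ∩ C) ≤ a * infDist (g x) D)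
      ↔
     (∃ a' > 0, ∃ s' > 0,
        ∀ p ∈ closedBall (toProd1 (x₀, g x₀)) s' ∩ (toProd1 '' (C ×ˢ D)),
          infDist p ((gTilde g) ⁻¹' {0} ∩ (toProd1 '' (C ×ˢ D)))
            ≤ a' * ‖gTilde g p‖)) := by
  obtain ⟨K, r, hr, hK⟩ := hLip
  set Kr : ℝ := (K : ℝ) with hKr
  have hKr0 : 0 ≤ Kr := K.coe_nonneg
  have hdist1 : ∀ q w : WithLp 1 (X × Y), dist q w = dist q.fst w.fst + dist q.snd w.snd := by
    intro q w
    rw [WithLp.prod_dist_eq_add (by norm_num)]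
    norm_num
  have hmem : ∀ q : WithLp 1 (X × Y),
      q ∈ toProd1 '' (C ×ˢ D) ↔ q.fst ∈ C ∧ q.snd ∈ D := by
    intro q
    constructor
    · rintro ⟨w, hw, rfl⟩; exact ⟨hw.1, hw.2⟩
    · rintro ⟨h1, h2⟩; exact ⟨(q.fst, q.snd), ⟨h1, h2⟩, rfl⟩
  have hgT : ∀ q : WithLp 1 (X × Y), gTilde g q = g q.fst - q.snd := fun _ => rfl
  set S : Set X := g ⁻¹' D ∩ C with hS
  set T : Set (WithLp 1 (X × Y)) := (gTilde g) ⁻¹' {0} ∩ (toProd1 '' (C ×ˢ D)) with hT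
  have hSne : S.Nonempty := ⟨x₀, hgx₀, hx₀⟩
  have hTne : T.Nonempty := by
    refine ⟨toProd1 (x₀, g x₀), ?_, (hmem _).2 ⟨hx₀, hgx₀⟩⟩
    simp [gTilde]
  constructor
  · rintro ⟨a, ha, s, hs, hcalm⟩
    set a' : ℝ := a * (Kr + 1) + 1 with ha'
    have ha'1 : 1 ≤ a' := by nlinarith
    have ha'pos : 0 < a' := by linarith
    refine ⟨a', ha'pos, min s (r / (2 * a')), lt_min hs (by positivity), ?_⟩
    rintro p ⟨hpball, hpCD⟩
    set x : X := p.fst with hx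
    set y : Y := p.snd with hy
    have hxC : x ∈ C := ((hmem p).1 hpCD).1
    have hyD : y ∈ D := ((hmem p).1 hpCD).2
    rw [mem_closedBall, hdist1] at hpball
    have hds : dist x x₀ + dist y (g x₀) ≤ min s (r / (2 * a')) := hpball
    have hxs : dist x x₀ ≤ s := by
      have := min_le_left s (r / (2 * a'))
      have h0 : 0 ≤ dist y (g x₀) := dist_nonneg
      linarith
    have hxr2 : dist x x₀ ≤ r / (2 * a') := by
      have := min_le_right s (r / (2 * a'))
      have h0 : 0 ≤ dist y (g x₀) := dist_nonneg
      linarith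
    have hyr2 : dist y (g x₀) ≤ r / (2 * a') := by
      have := min_le_right s (r / (2 * a'))
      have h0 : 0 ≤ dist x x₀ := dist_nonneg
      linarith
    have hr2a : r / (2 * a') ≤ r / 2 := by
      apply div_le_div_of_nonneg_left hr.le (by norm_num)
      nlinarith
    have hxball : x ∈ closedBall x₀ r := by
      rw [mem_closedBall]; linarith
    set B : ℝ := ‖g x - y‖ with hB
    have hgTB : ‖gTilde g p‖ = B := by rw [hgT]
    have hBnn : 0 ≤ B := norm_nonneg _
    -- dist (g x) D ≤ B
    have hdD : infDist (g x) D ≤ B := by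
      have h : infDist (g x) D ≤ dist (g x) y := infDist_le_dist_of_mem hyD
      rwa [dist_eq_norm] at h
    have hinfxS : infDist x S ≤ a * B :=
      le_trans (hcalm x ⟨mem_closedBall.2 hxs, hxC⟩)
        (by nlinarith [infDist_nonneg (x := g x) (s := D)])
    -- bound on B
    have hBbound : B ≤ (Kr + 1) * (r / (2 * a')) := by
      have h1 : dist (g x) (g x₀) ≤ Kr * dist x x₀ :=
        hK.dist_le_mul x hxball x₀ (mem_closedBall_self hr.le)
      have h2 : B ≤ dist (g x) (g x₀) + dist (g x₀) y := by
        rw [hB, ← dist_eq_norm]; exact dist_triangle _ _ _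
      rw [dist_comm (g x₀) y] at h2
      nlinarith
    rw [hgTB]
    apply le_of_forall_pos_le_add
    intro δ hδ
    set ε : ℝ := min (δ / (Kr + 2)) (r / 2) with hε
    have hεpos : 0 < ε := lt_min (by positivity) (by positivity)
    obtain ⟨x', hx'S, hx'd⟩ : ∃ x' ∈ S, dist x x' < a * B + ε := by
      rw [← infDist_lt_iff hSne]
      linarith
    have hx'ball : x' ∈ closedBall x₀ r := by
      rw [mem_closedBall]
      have h1 : dist x' x₀ ≤ dist x' x + dist x x₀ := dist_triangle _ _ _
      rw [dist_comm x' x] at h1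
      have hε2 : ε ≤ r / 2 := min_le_right _ _
      have haB : a * B ≤ a * ((Kr + 1) * (r / (2 * a'))) := by nlinarith
      have h2 : a * ((Kr + 1) * (r / (2 * a'))) + r / (2 * a') = a' * (r / (2 * a')) := by
        rw [ha']; ring
      have h3 : a' * (r / (2 * a')) = r / 2 := by
        field_simp
      linarith
    set q : WithLp 1 (X × Y) := toProd1 (x', g x') with hq
    have hqfst : q.fst = x' := rfl
    have hqsnd : q.snd = g x' := rfl
    have hqT : q ∈ T := by
      refine ⟨?_, (hmem q).2 ⟨by rw [hqfst]; exact hx'S.2, by rw [hqsnd]; exact hx'S.1⟩⟩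
      show gTilde g q ∈ ({0} : Set Y)
      rw [hgT, hqfst, hqsnd, sub_self]
      rfl
    have hdpq : dist p q = dist x x' + dist y (g x') := by
      rw [hdist1, hqfst, hqsnd]
    have hLxx : dist (g x) (g x') ≤ Kr * dist x x' := hK.dist_le_mul x hxball x' hx'ball
    have hyg : dist y (g x') ≤ B + Kr * dist x x' := by
      have h1 : dist y (g x') ≤ dist y (g x) + dist (g x) (g x') := dist_triangle _ _ _
      have h2 : dist y (g x) = B := by rw [hB, dist_comm, dist_eq_norm]
      linarith
    have hfinal : infDist p T ≤ (Kr + 1) * dist x x' + B := by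
      have h := infDist_le_dist_of_mem (x := p) hqT
      rw [hdpq] at h
      nlinarith
    have hε1 : ε ≤ δ / (Kr + 2) := min_le_left _ _
    have : (Kr + 1) * dist x x' + B ≤ a' * B + (Kr + 1) * ε := by
      have : (Kr + 1) * dist x x' ≤ (Kr + 1) * (a * B + ε) := by nlinarith
      rw [ha']; nlinarith
    have hKd : (Kr + 1) * ε ≤ δ := by
      have h5 : (Kr + 1) * (δ / (Kr + 2)) ≤ δ := by
        rw [mul_div_assoc', div_le_iff₀ (by positivity : (0:ℝ) < Kr + 2)]
        nlinarith
      nlinarith [mul_le_mul_of_nonneg_left hε1 (by positivity : (0:ℝ) ≤ Kr + 1)]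
    linarith
  · rintro ⟨a', ha', s', hs', hcalm⟩
    set s : ℝ := min r (s' / (2 * (2 * Kr + 1))) with hsdef
    have hspos : 0 < s := lt_min hr (by positivity)
    refine ⟨a', ha', s, hspos, ?_⟩
    rintro x ⟨hxball, hxC⟩
    rw [mem_closedBall] at hxball
    have hxr : x ∈ closedBall x₀ r :=
      mem_closedBall.2 (le_trans hxball (min_le_left _ _))
    have hxs2 : dist x x₀ ≤ s' / (2 * (2 * Kr + 1)) := le_trans hxball (min_le_right _ _)
    set d : ℝ := infDist (g x) D with hd
    have hdnn : 0 ≤ d := infDist_nonneg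
    have hLx : dist (g x) (g x₀) ≤ Kr * dist x x₀ :=
      hK.dist_le_mul x hxr x₀ (mem_closedBall_self hr.le)
    have hdK : d ≤ Kr * dist x x₀ :=
      le_trans (infDist_le_dist_of_mem hgx₀) hLx
    apply le_of_forall_pos_le_add
    intro δ hδ
    set ε : ℝ := min (δ / (a' + 1)) (s' / 2) with hε
    have hεpos : 0 < ε := lt_min (by positivity) (by positivity)
    obtain ⟨y, hyD, hyd⟩ : ∃ y ∈ D, dist (g x) y < d + ε := by
      rw [← infDist_lt_iff hDne]
      linarith
    set p : WithLp 1 (X × Y) := toProd1 (x, y) with hpdef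
    have hpfst : p.fst = x := rfl
    have hpsnd : p.snd = y := rfl
    have hpball : p ∈ closedBall (toProd1 (x₀, g x₀)) s' := by
      rw [mem_closedBall, hdist1, hpfst, hpsnd]
      show dist x x₀ + dist y (g x₀) ≤ s'
      have h1 : dist y (g x₀) ≤ dist y (g x) + dist (g x) (g x₀) := dist_triangle _ _ _
      rw [dist_comm y (g x)] at h1
      have hε2 : ε ≤ s' / 2 := min_le_right _ _
      have hs2 : (2 * Kr + 1) * (s' / (2 * (2 * Kr + 1))) = s' / 2 := by
        field_simp
      have h4 : dist x x₀ + dist y (g x₀) ≤ (Kr + 1) * dist x x₀ + d + ε := by nlinarith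
      nlinarith [mul_le_mul_of_nonneg_left hxs2 (by positivity : (0:ℝ) ≤ 2 * Kr + 1)]
    have hpCD : p ∈ toProd1 '' (C ×ˢ D) := (hmem p).2 ⟨hxC, hyD⟩
    have hmain := hcalm p ⟨hpball, hpCD⟩
    have hgTp : ‖gTilde g p‖ = dist (g x) y := by
      have e : gTilde g p = g x - y := rfl
      rw [e, dist_eq_norm]
    rw [hgTp] at hmain
    -- extract a nearby point of T
    obtain ⟨q, hqT, hqd⟩ : ∃ q ∈ T, dist p q < a' * dist (g x) y + ε := by
      rw [← infDist_lt_iff hTne]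
      have : a' * dist (g x) y < a' * dist (g x) y + ε := by linarith
      linarith
    have hqfst : q.fst ∈ S := by
      have h1 := (hmem q).1 hqT.2
      have h2 : gTilde g q = 0 := hqT.1
      rw [hgT, sub_eq_zero] at h2
      exact ⟨by rw [mem_preimage, h2]; exact h1.2, h1.1⟩
    have hxd : dist x q.fst ≤ dist p q := by
      rw [hdist1]
      have e1 : dist p.fst q.fst = dist x q.fst := rfl
      have h0 : (0:ℝ) ≤ dist p.snd q.snd := dist_nonneg
      linarith
    have hinf : infDist x S ≤ dist p q := le_trans (infDist_le_dist_of_mem hqfst) hxd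
    have hε1 : ε ≤ δ / (a' + 1) := min_le_left _ _
    have hεδ : (a' + 1) * ε ≤ δ := by
      rw [← le_div_iff₀' (by positivity : (0:ℝ) < a' + 1)]
      exact hε1
    nlinarith
end
end

section
/- Let X and Y be real Banach spaces, C ⊆ X and D ⊆ Y nonempty closed sets, f : X → ℝ, g : X → Y, and let x₀ ∈ C with g(x₀) ∈ D be a local minimizer of f over {x ∈ C : g(x) ∈ D}. Assume: f is Gâteaux differentiable at x₀ and Lipschitz with constant K_f > 0 near x₀; g is Gâteaux differentiable at x₀ and Lipschitz with constant K_g > 0 near x₀; the system 'g(x) ∈ D, x ∈ C' is calm at x₀ with constant a > 0; the contingent cones K(C, x₀) and K(D, g(x₀)) are convex; and C is tangentially regular at x₀ or D is tangentially regular at g(x₀). Then there exist y* ∈ Y* with ‖y*‖ ≤ K_f·(1 + a·(1 + K_g)) and ⟨y*, k⟩ ≤ 0 for all k ∈ K(D, g(x₀)), and x* ∈ X* with ⟨x*, h⟩ ≤ 0 for all h ∈ K(C, x₀), such that Df(x₀) + y* ∘ Dg(x₀) + x* = 0 in X*. -/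
open Filter Metric Topology Set

noncomputable section

section Helpers
variable {E : Type*} [NormedAddCommGroup E] [NormedSpace ℝ E]

lemma quot_nonneg (A : Set E) (x h : E) :
    ∀ᶠ τ in 𝓝[>] (0:ℝ), 0 ≤ infDist (x + τ • h) A / τ := by
  filter_upwards [self_mem_nhdsWithin] with τ (hτ : 0 < τ)
  exact div_nonneg infDist_nonneg hτ.le

lemma quot_le {A : Set E} {x : E} (hx : x ∈ A) (h : E) :
    ∀ᶠ τ in 𝓝[>] (0:ℝ), infDist (x + τ • h) A / τ ≤ ‖h‖ := by
  filter_upwards [self_mem_nhdsWithin] with τ (hτ : 0 < τ)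
  rw [div_le_iff₀ hτ]
  calc infDist (x + τ • h) A ≤ dist (x + τ • h) x := infDist_le_dist_of_mem hx
    _ = ‖τ • h‖ := by simp [dist_eq_norm]
    _ = ‖h‖ * τ := by rw [norm_smul, Real.norm_eq_abs, abs_of_pos hτ, mul_comm]

lemma map_mul_nhdsGT {c : ℝ} (hc : 0 < c) :
    Filter.map (fun τ : ℝ => c * τ) (𝓝[>] (0:ℝ)) = 𝓝[>] (0:ℝ) := by
  have h1 : ∀ {d : ℝ}, 0 < d →
      Filter.map (fun τ : ℝ => d * τ) (𝓝[>] (0:ℝ)) ≤ 𝓝[>] (0:ℝ) := by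
    intro d hd
    have t1 : Tendsto (fun τ : ℝ => d * τ) (𝓝[>] (0:ℝ)) (𝓝 0) := by
      have ht : Tendsto (fun τ : ℝ => d * τ) (𝓝 (0:ℝ)) (𝓝 (d * 0)) :=
        (continuous_const.mul continuous_id).tendsto 0
      rw [mul_zero] at ht
      exact ht.mono_left nhdsWithin_le_nhds
    have t2 : ∀ᶠ τ in 𝓝[>] (0:ℝ), d * τ ∈ Ioi (0:ℝ) := by
      filter_upwards [self_mem_nhdsWithin] with τ (hτ : 0 < τ)
      exact mul_pos hd hτ
    exact tendsto_nhdsWithin_iff.2 ⟨t1, t2⟩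
  refine le_antisymm (h1 hc) ?_
  calc 𝓝[>] (0:ℝ) = Filter.map ((fun τ : ℝ => c * τ) ∘ fun τ : ℝ => c⁻¹ * τ) (𝓝[>] (0:ℝ)) := by
        rw [show ((fun τ : ℝ => c * τ) ∘ fun τ : ℝ => c⁻¹ * τ) = id from
          funext fun τ => by simp [Function.comp_apply, hc.ne'], Filter.map_id]
    _ = Filter.map (fun τ : ℝ => c * τ) (Filter.map (fun τ : ℝ => c⁻¹ * τ) (𝓝[>] (0:ℝ))) :=
        (Filter.map_map).symm
    _ ≤ _ := Filter.map_mono (h1 (inv_pos.2 hc))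

lemma zero_mem_contingent {A : Set E} {x : E} (hx : x ∈ A) : (0:E) ∈ contingentCone A x := by
  have : (fun τ : ℝ => infDist (x + τ • (0:E)) A / τ) = fun _ => 0 := by
    funext τ; simp [infDist_zero_of_mem hx]
  simp only [contingentCone, lowerDini, Set.mem_setOf_eq, this]
  exact liminf_const 0

lemma contingent_frequently {A : Set E} {x : E} (hx : x ∈ A) {h : E}
    (hh : h ∈ contingentCone A x) {ε : ℝ} (hε : 0 < ε) :
    ∃ᶠ τ in 𝓝[>] (0:ℝ), infDist (x + τ • h) A / τ < ε := by
  apply frequently_lt_of_liminf_lt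
  · exact isCoboundedUnder_ge_of_eventually_le _ (quot_le hx h)
  · rw [show liminf (fun τ : ℝ => infDist (x + τ • h) A / τ) (𝓝[>] (0:ℝ)) = 0 from hh]
    exact hε

lemma contingent_smul {A : Set E} {x : E} (hx : x ∈ A) {h : E}
    (hh : h ∈ contingentCone A x) {c : ℝ} (hc : 0 < c) : c • h ∈ contingentCone A x := by
  refine le_antisymm ?_ ?_
  · apply le_of_forall_pos_le_add
    intro ε hε
    rw [zero_add]
    apply liminf_le_of_frequently_le ?_
      (isBoundedUnder_of_eventually_ge (quot_nonneg A x (c • h)))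
    have hfreq : ∃ᶠ τ in 𝓝[>] (0:ℝ), infDist (x + (c * τ) • h) A / (c * τ) < ε / c := by
      have := contingent_frequently hx hh (div_pos hε hc)
      rw [← map_mul_nhdsGT hc, Filter.frequently_map] at this
      exact this
    apply Frequently.mono (hfreq.and_eventually self_mem_nhdsWithin)
    rintro τ ⟨hlt, (hτ : 0 < τ)⟩
    have : infDist (x + τ • (c • h)) A / τ = c * (infDist (x + (c * τ) • h) A / (c * τ)) := by
      rw [smul_smul, mul_comm τ c]
      field_simp
    rw [this]
    calc c * (infDist (x + (c * τ) • h) A / (c * τ)) ≤ c * (ε / c) := by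
          apply mul_le_mul_of_nonneg_left hlt.le hc.le
      _ = ε := by field_simp
  · exact le_liminf_of_le
      (isCoboundedUnder_ge_of_eventually_le _ (quot_le hx (c • h)))
      (quot_nonneg A x (c • h))

lemma contingent_add {A : Set E} {x : E} (hx : x ∈ A)
    (hconv : Convex ℝ (contingentCone A x)) {h₁ h₂ : E}
    (hh₁ : h₁ ∈ contingentCone A x) (hh₂ : h₂ ∈ contingentCone A x) :
    h₁ + h₂ ∈ contingentCone A x := by
  have hmid : (1/2 : ℝ) • h₁ + (1/2 : ℝ) • h₂ ∈ contingentCone A x :=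
    hconv hh₁ hh₂ (by norm_num) (by norm_num) (by norm_num)
  have := contingent_smul hx hmid (show (0:ℝ) < 2 by norm_num)
  convert this using 1
  module

end Helpers

def penSet {X Y : Type*} [NormedAddCommGroup X] [NormedSpace ℝ X]
    [NormedAddCommGroup Y] [NormedSpace ℝ Y]
    (Df : X →L[ℝ] ℝ) (Dg : X →L[ℝ] Y) (M : ℝ) (KC : Set X) (KD : Set Y) (y : Y) : Set ℝ :=
  {r | ∃ h ∈ KC, ∃ k ∈ KD, r = Df h + M * ‖y - k + Dg h‖}


set_option maxHeartbeats 1600000 in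
theorem stmt7 {X Y : Type*} [NormedAddCommGroup X] [NormedSpace ℝ X] [CompleteSpace X]
    [NormedAddCommGroup Y] [NormedSpace ℝ Y] [CompleteSpace Y]
    (C : Set X) (D : Set Y) (hCne : C.Nonempty) (hDne : D.Nonempty)
    (hCcl : IsClosed C) (hDcl : IsClosed D)
    (f : X → ℝ) (g : X → Y) (x₀ : X) (hx₀ : x₀ ∈ C) (hgx₀ : g x₀ ∈ D)
    -- x₀ is a local minimizer of f over {x ∈ C : g x ∈ D}
    (hmin : ∃ ε > 0, ∀ x ∈ C, g x ∈ D → ‖x - x₀‖ ≤ ε → f x₀ ≤ f x)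
    -- f is Gâteaux differentiable at x₀ and Lipschitz with constant Kf near x₀
    (Df : X →L[ℝ] ℝ) (hDf : GateauxAt f x₀ Df)
    (Kf : ℝ) (hKf : 0 < Kf)
    (hfLip : ∃ r > 0, ∀ x ∈ closedBall x₀ r, ∀ x' ∈ closedBall x₀ r,
      |f x - f x'| ≤ Kf * ‖x - x'‖)
    -- g is Gâteaux differentiable at x₀ and Lipschitz with constant Kg near x₀
    (Dg : X →L[ℝ] Y) (hDg : GateauxAt g x₀ Dg)
    (Kg : ℝ) (hKg : 0 < Kg)
    (hgLip : ∃ r > 0, ∀ x ∈ closedBall x₀ r, ∀ x' ∈ closedBall x₀ r,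
      ‖g x - g x'‖ ≤ Kg * ‖x - x'‖)
    -- calmness of the system `g x ∈ D, x ∈ C` at x₀ with constant a
    (a : ℝ) (ha : 0 < a) (s : ℝ) (hs : 0 < s)
    (hcalm : ∀ x ∈ closedBall x₀ s ∩ C, infDist x (g ⁻¹' D ∩ C) ≤ a * infDist (g x) D)
    -- convexity of the contingent cones
    (hconvC : Convex ℝ (contingentCone C x₀))
    (hconvD : Convex ℝ (contingentCone D (g x₀)))
    -- tangential regularity of C at x₀ or of D at g x₀
    (hreg : TangentiallyRegular C x₀ ∨ TangentiallyRegular D (g x₀)) :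
    ∃ ystar : Y →L[ℝ] ℝ, ∃ xstar : X →L[ℝ] ℝ,
      ‖ystar‖ ≤ Kf * (1 + a * (1 + Kg)) ∧
      (∀ k ∈ contingentCone D (g x₀), ystar k ≤ 0) ∧
      (∀ h ∈ contingentCone C x₀, xstar h ≤ 0) ∧
      Df + ystar.comp Dg + xstar = 0 := by
  obtain ⟨ε, hε, hminx⟩ := hmin
  obtain ⟨rf, hrf, hfL⟩ := hfLip
  obtain ⟨rg, hrg, hgL⟩ := hgLip
  set b := Kf * a with hb_def
  have hb : 0 < b := mul_pos hKf ha
  set c := Kf * (1 + a * Kg) with hc_def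
  have hc : 0 < c := mul_pos hKf (by nlinarith)
  set M := Kf * (1 + a * (1 + Kg)) with hM_def
  have hM : 0 < M := mul_pos hKf (by nlinarith)
  have hMbc : M = b + c := by rw [hb_def, hc_def, hM_def]; ring
  clear_value b c M
  -- Step A : exact penalization on C
  have stepA : ∃ ε1 > 0, ∀ x ∈ C, ‖x - x₀‖ ≤ ε1 →
      f x₀ ≤ f x + b * infDist (g x) D := by
    set q : ℝ := 1 + a * Kg with hq_def
    have hq0 : 0 < q := by nlinarith
    refine ⟨min s (min rg (min (ε / (2*q)) (rf / (2*q)))), by positivity, ?_⟩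
    intro x hxC hxnear
    clear_value q
    have hxs : ‖x - x₀‖ ≤ s := hxnear.trans (min_le_left _ _)
    have hxrg : ‖x - x₀‖ ≤ rg :=
      hxnear.trans ((min_le_right _ _).trans (min_le_left _ _))
    have hxe : ‖x - x₀‖ ≤ ε / (2*q) :=
      hxnear.trans ((min_le_right _ _).trans ((min_le_right _ _).trans (min_le_left _ _)))
    have hxrf2 : ‖x - x₀‖ ≤ rf / (2*q) :=
      hxnear.trans ((min_le_right _ _).trans ((min_le_right _ _).trans (min_le_right _ _)))
    have hq1 : 1 ≤ q := by rw [hq_def]; nlinarith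
    have hxrf : ‖x - x₀‖ ≤ rf := hxrf2.trans (by
      rw [div_le_iff₀ (by linarith)]; nlinarith)
    have hqne : q ≠ 0 := hq0.ne'
    have hgd : infDist (g x) D ≤ Kg * ‖x - x₀‖ := by
      calc infDist (g x) D ≤ dist (g x) (g x₀) := infDist_le_dist_of_mem hgx₀
        _ = ‖g x - g x₀‖ := dist_eq_norm _ _
        _ ≤ Kg * ‖x - x₀‖ := hgL x (by simpa [mem_closedBall, dist_eq_norm] using hxrg)
              x₀ (by simp [mem_closedBall, hrg.le])
    have hgd0 : 0 ≤ infDist (g x) D := infDist_nonneg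
    have hcalmx : infDist x (g ⁻¹' D ∩ C) ≤ a * infDist (g x) D :=
      hcalm x ⟨by simpa [mem_closedBall, dist_eq_norm] using hxs, hxC⟩
    apply le_of_forall_pos_le_add
    intro ε' hε'
    set δ := min (ε' / Kf) (min (ε/2) (rf/2)) with hδ_def
    have hδ : 0 < δ := by positivity
    have hδ1 : δ ≤ ε' / Kf := min_le_left _ _
    have hδ2 : δ ≤ ε/2 := (min_le_right _ _).trans (min_le_left _ _)
    have hδ3 : δ ≤ rf/2 := (min_le_right _ _).trans (min_le_right _ _)
    clear_value δ
    have hSne : (g ⁻¹' D ∩ C).Nonempty := ⟨x₀, by simpa using hgx₀, hx₀⟩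
    obtain ⟨xb, hxbS, hxbd⟩ := (infDist_lt_iff hSne).1
      (lt_add_of_pos_right (infDist x (g ⁻¹' D ∩ C)) hδ)
    have hxbd' : dist x xb ≤ a * infDist (g x) D + δ :=
      hxbd.le.trans (by linarith [hcalmx])
    have hxbn : ‖xb - x‖ ≤ a * infDist (g x) D + δ := by
      rwa [dist_comm, dist_eq_norm] at hxbd'
    have h1 : ‖xb - x₀‖ ≤ q * ‖x - x₀‖ + δ := by
      have t1 : ‖xb - x₀‖ ≤ ‖xb - x‖ + ‖x - x₀‖ := norm_sub_le_norm_sub_add_norm_sub _ _ _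
      have t3 : a * infDist (g x) D ≤ a * (Kg * ‖x - x₀‖) :=
        mul_le_mul_of_nonneg_left hgd ha.le
      rw [hq_def]; nlinarith
    have hqx2 : q * ‖x - x₀‖ ≤ ε / 2 := by
      calc q * ‖x - x₀‖ ≤ q * (ε / (2*q)) := mul_le_mul_of_nonneg_left hxe hq0.le
        _ = ε / 2 := by field_simp
    have hqxrf : q * ‖x - x₀‖ ≤ rf / 2 := by
      calc q * ‖x - x₀‖ ≤ q * (rf / (2*q)) := mul_le_mul_of_nonneg_left hxrf2 hq0.le
        _ = rf / 2 := by field_simp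
    have hxbε : ‖xb - x₀‖ ≤ ε := by linarith
    have hxbrf : ‖xb - x₀‖ ≤ rf := by linarith
    have hfx0 : f x₀ ≤ f xb := hminx xb hxbS.2 hxbS.1 hxbε
    have hlip : |f xb - f x| ≤ Kf * ‖xb - x‖ :=
      hfL xb (by simpa [mem_closedBall, dist_eq_norm] using hxbrf)
        x (by simpa [mem_closedBall, dist_eq_norm] using hxrf)
    have hlip' : f xb - f x ≤ Kf * ‖xb - x‖ := (le_abs_self _).trans hlip
    have hKfn : Kf * ‖xb - x‖ ≤ Kf * (a * infDist (g x) D + δ) :=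
      mul_le_mul_of_nonneg_left hxbn hKf.le
    have hKfδ : Kf * δ ≤ ε' := by
      rw [le_div_iff₀ hKf] at hδ1; linarith
    have : Kf * (a * infDist (g x) D + δ) = b * infDist (g x) D + Kf * δ := by
      rw [hb_def]; ring
    linarith
  -- Step B : full penalization
  obtain ⟨ε1, hε1, hA⟩ := stepA
  have stepB : ∃ ε2 > 0, ∀ x : X, ‖x - x₀‖ ≤ ε2 →
      f x₀ ≤ f x + b * infDist (g x) D + c * infDist x C := by
    refine ⟨min (ε1/3) (min (rf/3) (rg/3)), by positivity, ?_⟩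
    set ε2 := min (ε1/3) (min (rf/3) (rg/3)) with hε2_def
    have hε2 : 0 < ε2 := by positivity
    have hε2a : ε2 ≤ ε1/3 := min_le_left _ _
    have hε2b : ε2 ≤ rf/3 := (min_le_right _ _).trans (min_le_left _ _)
    have hε2c : ε2 ≤ rg/3 := (min_le_right _ _).trans (min_le_right _ _)
    clear_value ε2
    intro x hx
    apply le_of_forall_pos_le_add
    intro ε' hε'
    set δ := min (ε'/c) ε2 with hδ_def
    have hδ : 0 < δ := by positivity
    have hδ1 : δ ≤ ε'/c := min_le_left _ _
    have hδ2 : δ ≤ ε2 := min_le_right _ _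
    clear_value δ
    have hCle : infDist x C ≤ ‖x - x₀‖ := by
      rw [← dist_eq_norm]; exact infDist_le_dist_of_mem hx₀
    obtain ⟨xb, hxbC, hxbd⟩ := (infDist_lt_iff hCne).1
      (lt_add_of_pos_right (infDist x C) hδ)
    have hxbn : ‖xb - x‖ ≤ infDist x C + δ :=
      le_of_lt (by rwa [dist_comm, dist_eq_norm] at hxbd)
    have hxbn' : ‖xb - x‖ ≤ 2 * ε2 := by linarith
    have hxb0 : ‖xb - x₀‖ ≤ 3 * ε2 := by
      have t1 : ‖xb - x₀‖ ≤ ‖xb - x‖ + ‖x - x₀‖ := norm_sub_le_norm_sub_add_norm_sub _ _ _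
      linarith
    have h2 := hA xb hxbC (hxb0.trans (by linarith))
    have hxrf : ‖x - x₀‖ ≤ rf := hx.trans (by linarith)
    have hxbrf : ‖xb - x₀‖ ≤ rf := hxb0.trans (by linarith)
    have hxrg : ‖x - x₀‖ ≤ rg := hx.trans (by linarith)
    have hxbrg : ‖xb - x₀‖ ≤ rg := hxb0.trans (by linarith)
    have hlip : f xb - f x ≤ Kf * ‖xb - x‖ :=
      (le_abs_self _).trans (hfL xb (by simpa [mem_closedBall, dist_eq_norm] using hxbrf)
        x (by simpa [mem_closedBall, dist_eq_norm] using hxrf))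
    have hgdx : infDist (g xb) D ≤ infDist (g x) D + Kg * ‖xb - x‖ := by
      have t := infDist_le_infDist_add_dist (x := g xb) (y := g x) (s := D)
      have t2 : dist (g xb) (g x) ≤ Kg * ‖xb - x‖ := by
        rw [dist_eq_norm]
        exact hgL xb (by simpa [mem_closedBall, dist_eq_norm] using hxbrg)
          x (by simpa [mem_closedBall, dist_eq_norm] using hxrg)
      linarith
    have hcn : c * ‖xb - x‖ ≤ c * (infDist x C + δ) := mul_le_mul_of_nonneg_left hxbn hc.le
    have hcδ : c * δ ≤ ε' := by rw [le_div_iff₀ hc] at hδ1; linarith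
    have hbKg : b * (infDist (g x) D + Kg * ‖xb - x‖) =
        b * infDist (g x) D + b * Kg * ‖xb - x‖ := by ring
    have hcsplit : Kf * ‖xb - x‖ + b * Kg * ‖xb - x‖ = c * ‖xb - x‖ := by
      rw [hb_def, hc_def]; ring
    have hbm : b * infDist (g xb) D ≤ b * (infDist (g x) D + Kg * ‖xb - x‖) :=
      mul_le_mul_of_nonneg_left hgdx hb.le
    have hcm : c * (infDist x C + δ) = c * infDist x C + c * δ := by ring
    linarith
  obtain ⟨ε2, hε2, hB⟩ := stepB
  -- Step C : key inequality on the contingent cones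
  have key : ∀ h ∈ contingentCone C x₀, ∀ k ∈ contingentCone D (g x₀),
      0 ≤ Df h + b * ‖Dg h - k‖ := by
    intro h hhC k hkD
    apply le_of_forall_pos_le_add
    intro ε'' hε''
    have hden : (0:ℝ) < 1 + 2*b + c := by linarith
    set ε' := ε'' / (1 + 2*b + c) with hε'_def
    have hε'pos : 0 < ε' := div_pos hε'' hden
    clear_value ε'
    -- generic computation at a good τ
    have main : ∀ τ : ℝ, 0 < τ → τ * ‖h‖ ≤ ε2 →
        |τ⁻¹ • (f (x₀ + τ • h) - f x₀) - Df h| < ε' →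
        ‖τ⁻¹ • (g (x₀ + τ • h) - g x₀) - Dg h‖ < ε' →
        infDist (x₀ + τ • h) C / τ < ε' →
        infDist (g x₀ + τ • k) D / τ < ε' →
        0 ≤ Df h + b * ‖Dg h - k‖ + ε'' := by
      intro τ hτ hτ2 hf1 hg1 hqC hqD
      have hnear : ‖x₀ + τ • h - x₀‖ ≤ ε2 := by
        rw [add_sub_cancel_left, norm_smul, Real.norm_eq_abs, abs_of_pos hτ]
        exact hτ2
      have hBx := hB (x₀ + τ • h) hnear
      -- (1)
      have h1 : f (x₀ + τ • h) - f x₀ ≤ τ * (Df h + ε') := by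
        have hval : f (x₀ + τ • h) - f x₀ = τ * (τ⁻¹ * (f (x₀ + τ • h) - f x₀)) := by
          field_simp
        have habs := (abs_lt.1 (by simpa [smul_eq_mul] using hf1)).2
        rw [hval]
        have : τ⁻¹ * (f (x₀ + τ • h) - f x₀) ≤ Df h + ε' := by linarith
        exact mul_le_mul_of_nonneg_left this hτ.le
      -- (2)
      have hsmul : ‖g (x₀ + τ • h) - g x₀ - τ • Dg h‖ =
          τ * ‖τ⁻¹ • (g (x₀ + τ • h) - g x₀) - Dg h‖ := by
        rw [show g (x₀ + τ • h) - g x₀ - τ • Dg h =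
            τ • (τ⁻¹ • (g (x₀ + τ • h) - g x₀) - Dg h) by
          rw [smul_sub, smul_smul, mul_inv_cancel₀ hτ.ne', one_smul]]
        rw [norm_smul, Real.norm_eq_abs, abs_of_pos hτ]
      have hdist : dist (g (x₀ + τ • h)) (g x₀ + τ • k) ≤ τ * ε' + τ * ‖Dg h - k‖ := by
        rw [dist_eq_norm]
        calc ‖g (x₀ + τ • h) - (g x₀ + τ • k)‖
            ≤ ‖g (x₀ + τ • h) - g x₀ - τ • Dg h‖ + ‖τ • (Dg h - k)‖ := by
              rw [show g (x₀ + τ • h) - (g x₀ + τ • k) =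
                  (g (x₀ + τ • h) - g x₀ - τ • Dg h) + τ • (Dg h - k) by
                rw [smul_sub]; abel]
              exact norm_add_le _ _
          _ ≤ τ * ε' + τ * ‖Dg h - k‖ := by
              rw [hsmul, norm_smul, Real.norm_eq_abs, abs_of_pos hτ]
              have := mul_le_mul_of_nonneg_left hg1.le hτ.le
              linarith
      have h2 : infDist (g (x₀ + τ • h)) D ≤ τ * (2 * ε' + ‖Dg h - k‖) := by
        have t := infDist_le_infDist_add_dist (x := g (x₀ + τ • h)) (y := g x₀ + τ • k) (s := D)
        have tq : infDist (g x₀ + τ • k) D ≤ τ * ε' := by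
          have := (div_lt_iff₀ hτ).1 hqD
          nlinarith
        have hid : τ * (2 * ε' + ‖Dg h - k‖) = τ * ε' + (τ * ε' + τ * ‖Dg h - k‖) := by ring
        linarith
      -- (3)
      have h3 : infDist (x₀ + τ • h) C ≤ τ * ε' := by
        have := (div_lt_iff₀ hτ).1 hqC
        nlinarith
      -- combine
      have hbm := mul_le_mul_of_nonneg_left h2 hb.le
      have hcm := mul_le_mul_of_nonneg_left h3 hc.le
      have hid2 : τ * (Df h + ε') + b * (τ * (2 * ε' + ‖Dg h - k‖)) + c * (τ * ε')
          = τ * (Df h + b * ‖Dg h - k‖ + (1 + 2*b + c) * ε') := by ring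
      have hsum : 0 ≤ τ * (Df h + b * ‖Dg h - k‖ + (1 + 2*b + c) * ε') := by linarith
      have hZ := div_nonneg hsum hτ.le
      rw [mul_comm τ _, mul_div_assoc, div_self hτ.ne', mul_one] at hZ
      have hεeq : (1 + 2*b + c) * ε' = ε'' := by
        rw [hε'_def, mul_div_cancel₀ _ hden.ne']
      linarith
    -- events
    have E1 : ∀ᶠ τ in 𝓝[>] (0:ℝ), |τ⁻¹ • (f (x₀ + τ • h) - f x₀) - Df h| < ε' := by
      have := hDf h
      rw [Metric.tendsto_nhds] at this
      simpa [Real.dist_eq] using this ε' hε'pos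
    have E2 : ∀ᶠ τ in 𝓝[>] (0:ℝ), ‖τ⁻¹ • (g (x₀ + τ • h) - g x₀) - Dg h‖ < ε' := by
      have := hDg h
      rw [Metric.tendsto_nhds] at this
      simpa [dist_eq_norm] using this ε' hε'pos
    have E3 : ∀ᶠ τ in 𝓝[>] (0:ℝ), 0 < τ := by
      filter_upwards [self_mem_nhdsWithin] with τ hτ; exact hτ
    have E4 : ∀ᶠ τ in 𝓝[>] (0:ℝ), τ * ‖h‖ ≤ ε2 := by
      have hpos : (0:ℝ) < ε2 / (‖h‖ + 1) := by positivity
      have hev : ∀ᶠ τ in 𝓝 (0:ℝ), τ < ε2 / (‖h‖ + 1) :=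
        Filter.Tendsto.eventually_lt_const hpos tendsto_id
      filter_upwards [hev.filter_mono nhdsWithin_le_nhds, self_mem_nhdsWithin]
        with τ hτlt (hτ : 0 < τ)
      have hn : (0:ℝ) < ‖h‖ + 1 := by positivity
      have h1 : τ * (‖h‖ + 1) < ε2 := (lt_div_iff₀ hn).1 hτlt
      nlinarith [norm_nonneg h]
    rcases hreg with hregC | hregD
    · have hhA : h ∈ adjacentCone C x₀ := hregC ▸ hhC
      have EC : ∀ᶠ τ in 𝓝[>] (0:ℝ), infDist (x₀ + τ • h) C / τ < ε' := by
        have := hhA (Iio_mem_nhds hε'pos)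
        exact this
      obtain ⟨τ, hqD', hE1, hE2, hτpos, hτ2, hqC'⟩ :=
        ((contingent_frequently hgx₀ hkD hε'pos).and_eventually
          (E1.and (E2.and (E3.and (E4.and EC))))).exists
      exact main τ hτpos hτ2 hE1 hE2 hqC' hqD'
    · have hkA : k ∈ adjacentCone D (g x₀) := hregD ▸ hkD
      have ED : ∀ᶠ τ in 𝓝[>] (0:ℝ), infDist (g x₀ + τ • k) D / τ < ε' := by
        have := hkA (Iio_mem_nhds hε'pos)
        exact this
      obtain ⟨τ, hqC', hE1, hE2, hτpos, hτ2, hqD'⟩ :=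
        ((contingent_frequently hx₀ hhC hε'pos).and_eventually
          (E1.and (E2.and (E3.and (E4.and ED))))).exists
      exact main τ hτpos hτ2 hE1 hE2 hqC' hqD'
  -- Step D : Hahn–Banach construction
  set KC := contingentCone C x₀ with hKC_def
  set KD := contingentCone D (g x₀) with hKD_def
  have hSne : ∀ y, (penSet Df Dg M KC KD y).Nonempty := fun y =>
    ⟨Df 0 + M * ‖y - 0 + Dg 0‖, 0, zero_mem_contingent hx₀, 0, zero_mem_contingent hgx₀, rfl⟩
  have hMb : b ≤ M := by rw [hMbc]; linarith
  have hSlb : ∀ y, ∀ r ∈ penSet Df Dg M KC KD y, -(M * ‖y‖) ≤ r := by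
    rintro y r ⟨h, hh, k, hk, rfl⟩
    have h1 := key h hh k hk
    have h2 : ‖Dg h - k‖ - ‖y‖ ≤ ‖y - k + Dg h‖ := by
      have heq : ‖Dg h - k‖ = ‖(y - k + Dg h) - y‖ := by
        rw [show (y - k + Dg h) - y = Dg h - k by abel]
      rw [heq]
      have := norm_sub_le (y - k + Dg h) y
      linarith
    have h3 := mul_le_mul_of_nonneg_left h2 hM.le
    nlinarith [norm_nonneg (Dg h - k), mul_nonneg (sub_nonneg.2 hMb) (norm_nonneg (Dg h - k))]
  have hbdd : ∀ y, BddBelow (penSet Df Dg M KC KD y) :=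
    fun y => ⟨-(M * ‖y‖), fun r hr => hSlb y r hr⟩
  obtain ⟨p, hp⟩ : ∃ p : Y → ℝ, ∀ y, p y = sInf (penSet Df Dg M KC KD y) := ⟨_, fun _ => rfl⟩
  have p_le : ∀ y (h k), h ∈ KC → k ∈ KD → p y ≤ Df h + M * ‖y - k + Dg h‖ := by
    intro y h k hh hk
    rw [hp]
    exact csInf_le (hbdd y) ⟨h, hh, k, hk, rfl⟩
  have p_lb : ∀ y, -(M * ‖y‖) ≤ p y := fun y => by
    rw [hp]; exact le_csInf (hSne y) (hSlb y)
  have p_csInf_le : ∀ y (z : ℝ), (∀ r ∈ penSet Df Dg M KC KD y, z ≤ r) → z ≤ p y := by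
    intro y z hz
    rw [hp]; exact le_csInf (hSne y) hz
  have p_norm : ∀ y, p y ≤ M * ‖y‖ := fun y => by
    have := p_le y 0 0 (zero_mem_contingent hx₀) (zero_mem_contingent hgx₀)
    simpa using this
  have N_add : ∀ y1 y2, p (y1 + y2) ≤ p y1 + p y2 := by
    intro y1 y2
    have H : ∀ r1 ∈ penSet Df Dg M KC KD y1, ∀ r2 ∈ penSet Df Dg M KC KD y2,
        p (y1 + y2) ≤ r1 + r2 := by
      rintro r1 ⟨h1, hh1, k1, hk1, rfl⟩ r2 ⟨h2, hh2, k2, hk2, rfl⟩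
      have hmemh : h1 + h2 ∈ KC := contingent_add hx₀ hconvC hh1 hh2
      have hmemk : k1 + k2 ∈ KD := contingent_add hgx₀ hconvD hk1 hk2
      refine (p_le _ (h1+h2) (k1+k2) hmemh hmemk).trans ?_
      have hnorm : ‖y1 + y2 - (k1 + k2) + Dg (h1 + h2)‖ ≤
          ‖y1 - k1 + Dg h1‖ + ‖y2 - k2 + Dg h2‖ := by
        rw [show y1 + y2 - (k1 + k2) + Dg (h1 + h2) =
            (y1 - k1 + Dg h1) + (y2 - k2 + Dg h2) by rw [map_add]; abel]
        exact norm_add_le _ _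
      have := mul_le_mul_of_nonneg_left hnorm hM.le
      rw [map_add]
      linarith
    have h1' : p (y1 + y2) - p y2 ≤ p y1 := p_csInf_le _ _ (fun r1 hr1 => by
      have h2' : p (y1 + y2) - r1 ≤ p y2 := p_csInf_le _ _ (fun r2 hr2 => by
        linarith [H r1 hr1 r2 hr2])
      linarith)
    linarith
  have ple : ∀ c' : ℝ, 0 < c' → ∀ y, p (c' • y) ≤ c' * p y := by
    intro c' hc' y
    have H : ∀ r ∈ penSet Df Dg M KC KD y, p (c' • y) ≤ c' * r := by
      rintro r ⟨h, hh, k, hk, rfl⟩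
      have hle := p_le (c' • y) (c' • h) (c' • k)
        (contingent_smul hx₀ hh hc') (contingent_smul hgx₀ hk hc')
      refine hle.trans_eq ?_
      rw [map_smul, map_smul,
        show c' • y - c' • k + c' • (Dg h) = c' • (y - k + Dg h) by module,
        norm_smul, Real.norm_eq_abs, abs_of_pos hc', smul_eq_mul]
      ring
    have hkey : c'⁻¹ * p (c' • y) ≤ p y := p_csInf_le _ _ (fun r hr => by
      have t := mul_le_mul_of_nonneg_left (H r hr) (inv_pos.2 hc').le
      rwa [inv_mul_cancel_left₀ hc'.ne'] at t)
    calc p (c' • y) = c' * (c'⁻¹ * p (c' • y)) := by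
          rw [← mul_assoc, mul_inv_cancel₀ hc'.ne', one_mul]
      _ ≤ c' * p y := mul_le_mul_of_nonneg_left hkey hc'.le
  have N_hom : ∀ c' : ℝ, 0 < c' → ∀ y, p (c' • y) = c' * p y := by
    intro c' hc' y
    refine le_antisymm (ple c' hc' y) ?_
    have hle := ple c'⁻¹ (inv_pos.2 hc') (c' • y)
    rw [smul_smul, inv_mul_cancel₀ hc'.ne', one_smul] at hle
    calc c' * p y ≤ c' * (c'⁻¹ * p (c' • y)) := mul_le_mul_of_nonneg_left hle hc'.le
      _ = p (c' • y) := by rw [← mul_assoc, mul_inv_cancel₀ hc'.ne', one_mul]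
  have hp0 : 0 ≤ p 0 := by have := p_lb 0; simpa using this
  obtain ⟨φ, -, hφ⟩ := exists_extension_of_le_sublinear ⟨⊥, 0⟩ p N_hom N_add
    (fun x => by
      have hx : (x : Y) = 0 := (Submodule.mem_bot ℝ).1 x.2
      show (0 : (⊥ : Submodule ℝ Y) →ₗ[ℝ] ℝ) x ≤ p (x : Y)
      rw [LinearMap.zero_apply, hx]
      exact hp0)
  have hφbound : ∀ y, ‖φ y‖ ≤ M * ‖y‖ := by
    intro y
    rw [Real.norm_eq_abs, abs_le]
    constructor
    · have h1 : φ (-y) ≤ M * ‖y‖ := (hφ (-y)).trans (by simpa using p_norm (-y))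
      rw [map_neg] at h1; linarith
    · exact (hφ y).trans (p_norm y)
  refine ⟨(LinearMap.mkContinuous φ M hφbound), -(Df + (LinearMap.mkContinuous φ M hφbound).comp Dg),
    LinearMap.mkContinuous_norm_le φ hM.le _, ?_, ?_, ?_⟩
  · intro k hk
    have hk0 : p k ≤ 0 := by
      have := p_le k 0 k (zero_mem_contingent hx₀) hk
      simpa using this
    simpa using (hφ k).trans hk0
  · intro h hh
    have h1 : φ (-(Dg h)) ≤ Df h := by
      have := p_le (-(Dg h)) h 0 hh (zero_mem_contingent hgx₀)
      have heq : -(Dg h) - 0 + Dg h = 0 := by abel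
      rw [heq] at this
      simpa using (hφ _).trans this
    rw [map_neg] at h1
    simp only [ContinuousLinearMap.neg_apply, ContinuousLinearMap.add_apply,
      ContinuousLinearMap.comp_apply, LinearMap.mkContinuous_apply]
    linarith
  · exact add_neg_cancel _
end
end

section
/- In ℝ², let C := {(x, y) : x ≥ 0 and x² + (y + 1)² = 1} and D := {(x, y) : y = x} ∪ {(x, y) : x ≥ 0 and x² + (y + 2)² = 4}. Then C ∩ D = {(0, 0)}, and there exist NO constants a > 0 and s > 0 such that dist(u, C ∩ D) ≤ a · dist(u, D) for all u ∈ C with ‖u‖ ≤ s. -/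
open Filter Metric Topology Set

set_option maxHeartbeats 1000000

noncomputable section

/-- The half-circle `C = {(x, y) : x ≥ 0, x² + (y + 1)² = 1}` in the Euclidean plane. -/
def Cset : Set (EuclideanSpace ℝ (Fin 2)) :=
  {u | 0 ≤ u 0 ∧ (u 0) ^ 2 + (u 1 + 1) ^ 2 = 1}

/-- The set `D = {(x, y) : y = x} ∪ {(x, y) : x ≥ 0, x² + (y + 2)² = 4}`
in the Euclidean plane. -/
def Dset : Set (EuclideanSpace ℝ (Fin 2)) :=
  {u | u 1 = u 0} ∪ {u | 0 ≤ u 0 ∧ (u 0) ^ 2 + (u 1 + 2) ^ 2 = 4}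

def pt (x y : ℝ) : EuclideanSpace ℝ (Fin 2) := (WithLp.equiv 2 _).symm ![x, y]

@[simp] lemma pt0 (x y : ℝ) : pt x y 0 = x := rfl
@[simp] lemma pt1 (x y : ℝ) : pt x y 1 = y := rfl

lemma inter_eq : Cset ∩ Dset = {0} := by
  ext u
  simp only [Cset, Dset, Set.mem_inter_iff, Set.mem_union, Set.mem_setOf_eq,
    Set.mem_singleton_iff]
  constructor
  · rintro ⟨⟨hx, hC⟩, hD⟩
    have h0 : u 0 = 0 ∧ u 1 = 0 := by
      rcases hD with h | ⟨_, h⟩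
      · constructor <;> nlinarith [sq_nonneg (u 0), sq_nonneg (u 1)]
      · constructor <;> nlinarith [sq_nonneg (u 0), sq_nonneg (u 1)]
    ext i
    fin_cases i
    · exact h0.1
    · exact h0.2
  · rintro rfl
    norm_num [show (0 : EuclideanSpace ℝ (Fin 2)) 0 = 0 from rfl,
      show (0 : EuclideanSpace ℝ (Fin 2)) 1 = 0 from rfl]

lemma dist_pt (x y x' y' : ℝ) : dist (pt x y) (pt x' y') = Real.sqrt ((x - x')^2 + (y - y')^2) := by
  rw [EuclideanSpace.dist_eq]
  congr 1
  simp [Fin.sum_univ_two, Real.dist_eq, sq_abs]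

lemma norm_pt (x y : ℝ) : ‖pt x y‖ = Real.sqrt (x^2 + y^2) := by
  rw [EuclideanSpace.norm_eq]
  congr 1
  simp [Fin.sum_univ_two, sq_abs]

theorem stmt11 :
    Cset ∩ Dset = {0} ∧
    ¬ ∃ a > (0:ℝ), ∃ s > (0:ℝ), ∀ u ∈ Cset, ‖u‖ ≤ s →
        infDist u (Cset ∩ Dset) ≤ a * infDist u Dset := by
  refine ⟨inter_eq, ?_⟩
  rintro ⟨a, ha, s, hs, h⟩
  set x : ℝ := min (1/(2*a)) (min (1/2) (s/2)) with hxdef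
  have hx0 : 0 < x := lt_min (by positivity) (lt_min one_half_pos (by positivity))
  have hx1 : x ≤ 1/2 := le_trans (min_le_right _ _) (min_le_left _ _)
  have hxa : x ≤ 1/(2*a) := min_le_left _ _
  have hxs : x ≤ s/2 := le_trans (min_le_right _ _) (min_le_right _ _)
  have h1x : (0:ℝ) ≤ 1 - x^2 := by nlinarith
  have h4x : (0:ℝ) ≤ 4 - x^2 := by nlinarith
  set s1 := Real.sqrt (1 - x^2) with hs1def
  set s2 := Real.sqrt (4 - x^2) with hs2def
  have hs1sq : s1^2 = 1 - x^2 := Real.sq_sqrt h1x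
  have hs2sq : s2^2 = 4 - x^2 := Real.sq_sqrt h4x
  have hs1nn : 0 ≤ s1 := Real.sqrt_nonneg _
  have hs2nn : 0 ≤ s2 := Real.sqrt_nonneg _
  set u := pt x (s1 - 1) with hudef
  set v := pt x (s2 - 2) with hvdef
  have huC : u ∈ Cset := by
    constructor
    · simpa [hudef] using hx0.le
    · simp only [hudef, pt0, pt1]
      nlinarith
  have hvD : v ∈ Dset := by
    right
    constructor
    · simpa [hvdef] using hx0.le
    · simp only [hvdef, pt0, pt1]
      nlinarith
  -- norm bounds
  have hnormu : ‖u‖ = Real.sqrt (x^2 + (s1-1)^2) := norm_pt _ _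
  have hu_ge : x ≤ ‖u‖ := by
    rw [hnormu]
    calc x = Real.sqrt (x^2) := (Real.sqrt_sq hx0.le).symm
    _ ≤ _ := Real.sqrt_le_sqrt (by nlinarith)
  have hs1le1 : s1 ≤ 1 := by nlinarith
  have h1ms1 : 1 - s1 ≤ x^2 := by nlinarith
  have hu_le : ‖u‖ ≤ 2*x := by
    rw [hnormu]
    calc Real.sqrt (x^2 + (s1-1)^2) ≤ Real.sqrt ((2*x)^2) := by
          apply Real.sqrt_le_sqrt; nlinarith
    _ = 2*x := Real.sqrt_sq (by positivity)
  have hus : ‖u‖ ≤ s := by linarith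
  -- dist u v ≤ x^2
  have hdistuv : dist u v ≤ x^2 := by
    rw [hudef, hvdef, dist_pt]
    have : (x - x)^2 + ((s1-1) - (s2-2))^2 = (s1 + 1 - s2)^2 := by ring
    rw [this]
    rw [Real.sqrt_sq_eq_abs]
    have hs2ge : 1 + s1 ≤ s2 := by nlinarith
    rw [abs_of_nonpos (by linarith)]
    have hkey1 : 1 - x^2 - x^4/2 ≤ s1*(1+x^2) := by
      by_cases hc : 1 - x^2 - x^4/2 ≤ 0
      · nlinarith [mul_nonneg hs1nn (sq_nonneg x)]
      · push_neg at hc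
        have e : (s1*(1+x^2))^2 = (1-x^2)*(1+x^2)^2 := by rw [mul_pow, hs1sq]
        have hprod : (s1*(1+x^2))^2 - (1-x^2-x^4/2)^2 ≥ 0 := by
          rw [e]; nlinarith [sq_nonneg x, sq_nonneg (x^2), sq_nonneg (x^3), hx0.le, hx1]
        nlinarith [mul_nonneg hs1nn (sq_nonneg x)]
    have hb : s2 ≤ 1 + s1 + x^2 := by
      rw [hs2def, show 1+s1+x^2 = Real.sqrt ((1+s1+x^2)^2) from (Real.sqrt_sq (by positivity)).symm]
      apply Real.sqrt_le_sqrt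
      nlinarith
    linarith
  have hDle : infDist u Dset ≤ x^2 := le_trans (infDist_le_dist_of_mem hvD) hdistuv
  have hDnn : 0 ≤ infDist u Dset := infDist_nonneg
  have hkey := h u huC hus
  rw [inter_eq, infDist_singleton, dist_zero_right] at hkey
  have hax : x ≤ a * x^2 := le_trans hu_ge (le_trans hkey (by nlinarith))
  have h2 : a * x ≤ 1/2 := by
    have h3 : a * x ≤ a * (1/(2*a)) := mul_le_mul_of_nonneg_left hxa ha.le
    have ha' : a ≠ 0 := ne_of_gt ha
    calc a*x ≤ a * (1/(2*a)) := h3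
    _ = 1/2 := by field_simp
  nlinarith [mul_le_mul_of_nonneg_right h2 hx0.le]
end
end
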